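/- arXiv:1103.5531 — 6 statements merged into one kernel-verified Lean document; each statement's English description precedes it below -/
import Mathlib

section
/- Let G be a finite simple graph such that every acyclic coloring of G is also a star coloring of G. Then G is a cograph, i.e., G contains no induced path on four vertices. -/
open SimpleGraph

/-- A proper vertex coloring: adjacent vertices receive distinct colors. -/
def IsProperColoring {V α : Type*} (G : SimpleGraph V) (φ : V → α) : Prop :=
  ∀ ⦃u v : V⦄, G.Adj u v → φ u ≠ φ v

/-- An acyclic coloring: a proper coloring such that the subgraph induced by the
union of any two color classes contains no cycle. -/
def IsAcyclicColoring {V α : Type*} (G : SimpleGraph V) (φ : V → α) : Prop :=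
  IsProperColoring G φ ∧
    ∀ c₁ c₂ : α, (G.induce {v | φ v = c₁ ∨ φ v = c₂}).IsAcyclic

/-- A graph contains a path on four (distinct) vertices `a-b-c-d`,
not necessarily induced. -/
def HasP4 {V : Type*} (G : SimpleGraph V) : Prop :=
  ∃ a b c d : V, a ≠ b ∧ a ≠ c ∧ a ≠ d ∧ b ≠ c ∧ b ≠ d ∧ c ≠ d ∧
    G.Adj a b ∧ G.Adj b c ∧ G.Adj c d

/-- A star coloring: a proper coloring such that the subgraph induced by the
union of any two color classes contains no path on four vertices. -/
def IsStarColoring {V α : Type*} (G : SimpleGraph V) (φ : V → α) : Prop :=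
  IsProperColoring G φ ∧
    ∀ c₁ c₂ : α, ¬ HasP4 (G.induce {v | φ v = c₁ ∨ φ v = c₂})

/-- A cograph: a graph with no induced path on four vertices. -/
def IsCograph {V : Type*} (G : SimpleGraph V) : Prop :=
  ¬ ∃ a b c d : V, a ≠ b ∧ a ≠ c ∧ a ≠ d ∧ b ≠ c ∧ b ≠ d ∧ c ≠ d ∧
    G.Adj a b ∧ G.Adj b c ∧ G.Adj c d ∧
    ¬ G.Adj a c ∧ ¬ G.Adj a d ∧ ¬ G.Adj b d

/-- The acyclic chromatic number: the least number of colors in an acyclic coloring. -/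
noncomputable def acyclicChromaticNumber {V : Type*} (G : SimpleGraph V) : ℕ :=
  sInf {n : ℕ | ∃ φ : V → Fin n, IsAcyclicColoring G φ}

/-- The star chromatic number: the least number of colors in a star coloring. -/
noncomputable def starChromaticNumber {V : Type*} (G : SimpleGraph V) : ℕ :=
  sInf {n : ℕ | ∃ φ : V → Fin n, IsStarColoring G φ}

/-- A cycle is induced if the only edges of the graph among its vertices
are the edges of the cycle. -/
def SimpleGraph.Walk.IsInducedCycle {V : Type*} {G : SimpleGraph V} {v : V}
    (p : G.Walk v v) : Prop :=
  p.IsCycle ∧ ∀ u w : V, u ∈ p.support → w ∈ p.support → G.Adj u w → s(u, w) ∈ p.edges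

/-- A graph is chordal if it has no induced cycle on four or more vertices. -/
def IsChordal {V : Type*} (G : SimpleGraph V) : Prop :=
  ∀ (v : V) (p : G.Walk v v), p.IsInducedCycle → p.length ≤ 3

/-- The treewidth of `G`: the minimum of `ω(G⁺) - 1` over all triangulations
(chordal supergraphs on the same vertex set) `G⁺` of `G`. -/
noncomputable def treewidth {V : Type*} (G : SimpleGraph V) : ℕ :=
  sInf {k : ℕ | ∃ H : SimpleGraph V, G ≤ H ∧ IsChordal H ∧ k = H.cliqueNum - 1}

/-- An interval graph: vertices can be mapped to real closed intervals so that
two distinct vertices are adjacent iff their intervals intersect. -/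
def IsIntervalGraph {V : Type*} (G : SimpleGraph V) : Prop :=
  ∃ f : V → ℝ × ℝ, ∀ u v : V, u ≠ v →
    (G.Adj u v ↔ (Set.Icc (f u).1 (f u).2 ∩ Set.Icc (f v).1 (f v).2).Nonempty)

/-- The pathwidth of `G`: the minimum of `ω(G⁺) - 1` over all intervalizations
(interval supergraphs on the same vertex set) `G⁺` of `G`. -/
noncomputable def pathwidth {V : Type*} (G : SimpleGraph V) : ℕ :=
  sInf {k : ℕ | ∃ H : SimpleGraph V, G ≤ H ∧ IsIntervalGraph H ∧ k = H.cliqueNum - 1}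

/-- The join of two graphs on disjoint vertex sets: their disjoint union together
with all edges between the two sides. -/
def SimpleGraph.join {V₁ V₂ : Type*} (G₁ : SimpleGraph V₁) (G₂ : SimpleGraph V₂) :
    SimpleGraph (V₁ ⊕ V₂) where
  Adj x y :=
    match x, y with
    | Sum.inl a, Sum.inl b => G₁.Adj a b
    | Sum.inr a, Sum.inr b => G₂.Adj a b
    | Sum.inl _, Sum.inr _ => True
    | Sum.inr _, Sum.inl _ => True
  symm := ⟨by rintro (a | a) (b | b) h <;> simp_all <;> exact h.symm⟩
  loopless := ⟨by rintro (a | a) h <;> simp_all⟩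


lemma acyclic_of_level {W : Type*} (G : SimpleGraph W) (f : W → ℕ)
    (hinj : Function.Injective f)
    (hadj : ∀ u v, G.Adj u v → f u + 1 = f v ∨ f v + 1 = f u) :
    G.IsAcyclic := by
  classical
  intro v c hc
  obtain ⟨u, hu, hmax⟩ : ∃ u ∈ c.support, ∀ x ∈ c.support, f x ≤ f u := by
    obtain ⟨u, hu, hmax⟩ := Finset.exists_max_image c.support.toFinset f
      ⟨v, by simp [c.start_mem_support]⟩
    exact ⟨u, List.mem_toFinset.mp hu, fun x hx => hmax x (List.mem_toFinset.mpr hx)⟩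
  have hmem : ∀ x ∈ (c.rotate u hu).support, x ∈ c.support := by
    intro x hx
    rw [Walk.support_eq_cons, List.mem_cons] at hx
    rcases hx with rfl | hx
    · exact hu
    · exact List.mem_of_mem_tail (((Walk.support_rotate c u hu).mem_iff).mp hx)
  have key : ∀ (q : G.Walk u u), q.IsCycle → (∀ x ∈ q.support, f x ≤ f u) → False := by
    intro q hq hmax'
    cases q with
    | nil => exact Walk.IsCycle.not_of_nil hq
    | @cons _ w _ h p =>
      have hlen : 3 ≤ p.length + 1 := by
        have := hq.three_le_length; simpa using this
      rw [Walk.cons_isCycle_iff] at hq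
      obtain ⟨hp, _⟩ := hq
      have hwmem : w ∈ (Walk.cons h p).support := by simp [Walk.support_cons, p.start_mem_support]
      have hfw : f w + 1 = f u := by
        rcases hadj u w h with h1 | h1
        · have := hmax' w hwmem; omega
        · exact h1
      have hnn : ¬ p.reverse.Nil := by
        rw [Walk.not_nil_iff_lt_length, Walk.length_reverse]; omega
      obtain ⟨x, h2, p2, heq⟩ := Walk.not_nil_iff.mp hnn
      have hxmem : x ∈ (Walk.cons h p).support := by
        have : x ∈ p.reverse.support := by rw [heq]; simp [p2.start_mem_support]
        rw [Walk.support_reverse, List.mem_reverse] at this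
        simp [Walk.support_cons, this]
      have hfx : f x + 1 = f u := by
        rcases hadj u x h2 with h1 | h1
        · have := hmax' x hxmem; omega
        · exact h1
      have hxw : x = w := hinj (by omega)
      subst hxw
      have hp2 : p2.IsPath := by
        have := hp.reverse
        rw [heq, Walk.cons_isPath_iff] at this
        exact this.1
      have : p2 = Walk.nil := by
        have := SimpleGraph.Path.loop_eq (⟨p2, hp2⟩ : G.Path x x)
        exact congrArg Subtype.val this
      subst this
      have : p.reverse.length = 1 := by rw [heq]; simp
      rw [Walk.length_reverse] at this
      omega
  exact key (c.rotate u hu) (hc.rotate hu) (fun x hx => hmax x (hmem x hx))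

lemma acyclic_induce {V : Type*} (G : SimpleGraph V) (S : Set V) (f : V → ℕ)
    (hinj : ∀ u v, u ∈ S → v ∈ S → f u = f v → u = v)
    (hadj : ∀ u v, u ∈ S → v ∈ S → G.Adj u v → f u + 1 = f v ∨ f v + 1 = f u) :
    (G.induce S).IsAcyclic := by
  apply acyclic_of_level _ (fun x => f x.1)
  · intro u v huv
    exact Subtype.ext (hinj u.1 v.1 u.2 v.2 huv)
  · intro u v huv
    exact hadj u.1 v.1 u.2 v.2 huv


section helpers
variable {V : Type*} (G : SimpleGraph V)

lemma L1 (a b c d : V) (hab : a ≠ b) (hac' : a ≠ c) (had' : a ≠ d) (hbc' : b ≠ c)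
    (hbd' : b ≠ d) (hcd' : c ≠ d)
    (hac : ¬ G.Adj a c) (had : ¬ G.Adj a d) (hbd : ¬ G.Adj b d)
    (S : Set V) (hS : ∀ v ∈ S, v = a ∨ v = b ∨ v = c ∨ v = d) :
    (G.induce S).IsAcyclic := by
  classical
  apply acyclic_induce G S
    (fun v => if v = a then 0 else if v = b then 1 else if v = c then 2 else if v = d then 3 else 4)
  · intro u v hu hv hf
    rcases hS u hu with rfl | rfl | rfl | rfl <;> rcases hS v hv with rfl | rfl | rfl | rfl <;>
      first
        | rfl
        | (clear hS hu hv hac had hbd; split_ifs at hf <;> first | omega | simp_all)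
  · intro u v hu hv h
    rcases hS u hu with rfl | rfl | rfl | rfl <;> rcases hS v hv with rfl | rfl | rfl | rfl <;>
      first
        | exact absurd h (G.loopless.irrefl _)
        | exact absurd h (by assumption)
        | exact absurd h.symm (by assumption)
        | (clear hS hu hv hac had hbd h; split_ifs <;> first | omega | simp_all)

lemma L2 (a c x : V) (hac : ¬ G.Adj a c)
    (S : Set V) (hS : ∀ v ∈ S, v = a ∨ v = c ∨ v = x) :
    (G.induce S).IsAcyclic := by
  classical
  apply acyclic_induce G S (fun v => if v = x then 1 else if v = a then 0 else 2)
  · intro u v hu hv hf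
    rcases hS u hu with rfl | rfl | rfl <;> rcases hS v hv with rfl | rfl | rfl <;>
      first
        | rfl
        | (clear hS hu hv hac; split_ifs at hf <;> first | omega | simp_all)
  · intro u v hu hv h
    rcases hS u hu with rfl | rfl | rfl <;> rcases hS v hv with rfl | rfl | rfl <;>
      first
        | exact absurd h (G.loopless.irrefl _)
        | exact absurd h (by assumption)
        | exact absurd h.symm (by assumption)
        | (have h1 := G.ne_of_adj h; clear hS hu hv hac h;
           split_ifs <;> first | omega | simp_all)

lemma L4 (x y : V) (S : Set V) (hS : ∀ v ∈ S, v = x ∨ v = y) :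
    (G.induce S).IsAcyclic := by
  classical
  apply acyclic_induce G S (fun v => if v = x then 0 else 1)
  · intro u v hu hv hf
    rcases hS u hu with rfl | rfl <;> rcases hS v hv with rfl | rfl <;>
      first
        | rfl
        | (clear hS hu hv; split_ifs at hf <;> first | omega | simp_all)
  · intro u v hu hv h
    rcases hS u hu with rfl | rfl <;> rcases hS v hv with rfl | rfl <;>
      first
        | exact absurd h (G.loopless.irrefl _)
        | (have h1 := G.ne_of_adj h; clear hS hu hv h;
           split_ifs <;> first | omega | simp_all)

end helpers

theorem key_aux {V : Type*} [Fintype V] (G : SimpleGraph V) (a b c d : V)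
    (hab' : a ≠ b) (hac' : a ≠ c) (had' : a ≠ d) (hbc' : b ≠ c) (hbd' : b ≠ d) (hcd' : c ≠ d)
    (hab : G.Adj a b) (hbc : G.Adj b c) (hcd : G.Adj c d)
    (hac : ¬ G.Adj a c) (had : ¬ G.Adj a d) (hbd : ¬ G.Adj b d) :
    ∃ φ : V → ℕ, IsAcyclicColoring G φ ∧ ¬ IsStarColoring G φ := by
  classical
  set enc : V → ℕ := fun v => ((Fintype.equivFin V) v : ℕ) with henc
  have encInj : Function.Injective enc := fun u v h =>
    (Fintype.equivFin V).injective (Fin.val_injective h)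
  set φ : V → ℕ := fun v => if v = a ∨ v = c then 0 else if v = b ∨ v = d then 1 else enc v + 2
    with hφ
  have hφa : φ a = 0 := by simp [hφ]
  have hφc : φ c = 0 := by simp [hφ]
  have hφb : φ b = 1 := by simp [hφ, hab'.symm, hbc']
  have hφd : φ d = 1 := by simp [hφ, had'.symm, hcd'.symm]
  have class0 : ∀ v, φ v = 0 → v = a ∨ v = c := by
    intro v hv
    simp only [hφ] at hv
    split_ifs at hv with h1 h2 <;>
      first | exact h1 | omega
  have class1 : ∀ v, φ v = 1 → v = b ∨ v = d := by
    intro v hv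
    simp only [hφ] at hv
    split_ifs at hv with h1 h2 <;>
      first | exact h2 | omega
  have classk : ∀ (k : ℕ), k ≠ 0 → k ≠ 1 → ∀ v w, φ v = k → φ w = k → v = w := by
    intro k h0 h1 v w hv hw
    simp only [hφ] at hv hw
    split_ifs at hv with ha1 ha2
    · omega
    · omega
    · split_ifs at hw with hb1 hb2
      · omega
      · omega
      · exact encInj (by omega)
  have hclass : ∀ k : ℕ, k ≠ 0 → k ≠ 1 → ∃ x, ∀ v, φ v = k → v = x := by
    intro k h0 h1
    by_cases h : ∃ v, φ v = k
    · obtain ⟨x, hx⟩ := h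
      exact ⟨x, fun v hv => classk k h0 h1 v x hv hx⟩
    · exact ⟨a, fun v hv => absurd ⟨v, hv⟩ h⟩
  refine ⟨φ, ⟨?_, ?_⟩, ?_⟩
  · -- proper
    intro u v huv heq
    by_cases h0 : φ u = 0
    · have hu0 := class0 u h0
      have hv0 := class0 v (heq ▸ h0)
      rcases hu0 with rfl | rfl <;> rcases hv0 with rfl | rfl
      · exact G.loopless.irrefl _ huv
      · exact hac huv
      · exact hac huv.symm
      · exact G.loopless.irrefl _ huv
    · by_cases h1 : φ u = 1
      · have hu1 := class1 u h1
        have hv1 := class1 v (heq ▸ h1)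
        rcases hu1 with rfl | rfl <;> rcases hv1 with rfl | rfl
        · exact G.loopless.irrefl _ huv
        · exact hbd huv
        · exact hbd huv.symm
        · exact G.loopless.irrefl _ huv
      · have := classk (φ u) h0 h1 u v rfl heq.symm
        subst this
        exact G.loopless.irrefl _ huv
  · -- acyclic
    intro c₁ c₂
    by_cases e10 : c₁ = 0
    · subst e10
      by_cases e20 : c₂ = 0
      · subst e20
        apply L4 G a c
        intro v hv
        rcases hv with h | h <;> exact class0 v h
      · by_cases e21 : c₂ = 1
        · subst e21
          apply L1 G a b c d hab' hac' had' hbc' hbd' hcd' hac had hbd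
          intro v hv
          rcases hv with h | h
          · rcases class0 v h with rfl | rfl <;> tauto
          · rcases class1 v h with rfl | rfl <;> tauto
        · obtain ⟨x, hx⟩ := hclass c₂ e20 e21
          apply L2 G a c x hac
          intro v hv
          rcases hv with h | h
          · rcases class0 v h with rfl | rfl <;> tauto
          · exact Or.inr (Or.inr (hx v h))
    · by_cases e11 : c₁ = 1
      · subst e11
        by_cases e20 : c₂ = 0
        · subst e20
          apply L1 G a b c d hab' hac' had' hbc' hbd' hcd' hac had hbd
          intro v hv
          rcases hv with h | h
          · rcases class1 v h with rfl | rfl <;> tauto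
          · rcases class0 v h with rfl | rfl <;> tauto
        · by_cases e21 : c₂ = 1
          · subst e21
            apply L4 G b d
            intro v hv
            rcases hv with h | h <;> exact class1 v h
          · obtain ⟨x, hx⟩ := hclass c₂ e20 e21
            apply L2 G b d x hbd
            intro v hv
            rcases hv with h | h
            · rcases class1 v h with rfl | rfl <;> tauto
            · exact Or.inr (Or.inr (hx v h))
      · obtain ⟨x, hx⟩ := hclass c₁ e10 e11
        by_cases e20 : c₂ = 0
        · subst e20
          apply L2 G a c x hac
          intro v hv
          rcases hv with h | h
          · exact Or.inr (Or.inr (hx v h))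
          · rcases class0 v h with rfl | rfl <;> tauto
        · by_cases e21 : c₂ = 1
          · subst e21
            apply L2 G b d x hbd
            intro v hv
            rcases hv with h | h
            · exact Or.inr (Or.inr (hx v h))
            · rcases class1 v h with rfl | rfl <;> tauto
          · obtain ⟨y, hy⟩ := hclass c₂ e20 e21
            apply L4 G x y
            intro v hv
            rcases hv with h | h
            · exact Or.inl (hx v h)
            · exact Or.inr (hy v h)
  · -- not star
    rintro ⟨-, hstar⟩
    apply hstar 0 1
    refine ⟨⟨a, Or.inl hφa⟩, ⟨b, Or.inr hφb⟩, ⟨c, Or.inl hφc⟩, ⟨d, Or.inr hφd⟩,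
      fun h => hab' (congrArg Subtype.val h), fun h => hac' (congrArg Subtype.val h),
      fun h => had' (congrArg Subtype.val h), fun h => hbc' (congrArg Subtype.val h),
      fun h => hbd' (congrArg Subtype.val h), fun h => hcd' (congrArg Subtype.val h),
      hab, hbc, hcd⟩


/-- If every acyclic coloring of a finite graph `G` is a star coloring,
then `G` is a cograph. -/
theorem cograph_of_acyclic_colorings_are_star_colorings {V : Type*} [Fintype V]
    (G : SimpleGraph V)
    (h : ∀ φ : V → ℕ, IsAcyclicColoring G φ → IsStarColoring G φ) :
    IsCograph G := by
  rintro ⟨a, b, c, d, h1, h2, h3, h4, h5, h6, hab, hbc, hcd, hac, had, hbd⟩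
  obtain ⟨φ, hacy, hnstar⟩ := key_aux G a b c d h1 h2 h3 h4 h5 h6 hab hbc hcd hac had hbd
  exact hnstar (h φ hacy)
end

section
/- For every cograph G, the star chromatic number of G equals the acyclic chromatic number of G: χ_s(G) = χ_a(G). -/
open SimpleGraph

private lemma tail_get_ne {α : Type*} (l : List α) (hnd : l.tail.Nodup) (i j : ℕ)
    (hi : i + 1 < l.length) (hj : j + 1 < l.length) (hij : i ≠ j) :
    l.get ⟨i+1, hi⟩ ≠ l.get ⟨j+1, hj⟩ := by
  cases l with
  | nil => simp at hi
  | cons a t =>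
    simp only [List.get_cons_succ]
    simp only [List.tail_cons] at hnd
    intro h
    have := hnd.get_inj_iff.mp h
    simp only [Fin.mk.injEq] at this
    exact hij this

private lemma cycle_alt {V : Type*} {G : SimpleGraph V} {v : V} {p : G.Walk v v}
    (hp : p.IsCycle) :
    HasP4 G ∨ ∃ a b c : V, G.Adj a b ∧ G.Adj b c ∧ G.Adj c a := by
  have h3 := hp.three_le_length
  have hlen : p.support.length = p.length + 1 := p.length_support
  have hchain : ∀ (i : ℕ) (h : i + 1 < p.support.length),
      G.Adj (p.support.get ⟨i, by omega⟩) (p.support.get ⟨i + 1, h⟩) :=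
    List.isChain_iff_getElem.mp p.isChain_adj_support
  have hnd : p.support.tail.Nodup := hp.2
  have hlast : p.support.get ⟨p.length, by omega⟩ = p.support.get ⟨0, by omega⟩ := by
    have h1 : p.support.get ⟨p.length, by omega⟩ = p.support.getLast (by simp) := by
      rw [List.getLast_eq_getElem, List.get_eq_getElem]
      congr 1
      simp [hlen]
    rw [h1, p.getLast_support]
    have h2 : p.support.get ⟨0, by omega⟩ = p.support.head (by simp) :=
      List.get_mk_zero _
    rw [h2, p.head_support]
  rcases Nat.lt_or_ge p.length 4 with h4 | h4
  · -- length = 3 : triangle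
    have e3 : p.length = 3 := by omega
    refine Or.inr ⟨p.support.get ⟨0, by omega⟩, p.support.get ⟨1, by omega⟩,
      p.support.get ⟨2, by omega⟩, ?_, ?_, ?_⟩
    · exact hchain 0 (by omega)
    · exact hchain 1 (by omega)
    · have h23 := hchain 2 (by omega)
      have : (⟨p.length, by omega⟩ : Fin p.support.length) = ⟨3, by omega⟩ := by
        simp [e3]
      rw [this] at hlast
      rw [hlast] at h23
      exact h23
  · -- length ≥ 4 : P4
    refine Or.inl ⟨p.support.get ⟨0, by omega⟩, p.support.get ⟨1, by omega⟩,
      p.support.get ⟨2, by omega⟩, p.support.get ⟨3, by omega⟩,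
      ?_, ?_, ?_, ?_, ?_, ?_, hchain 0 (by omega), hchain 1 (by omega), hchain 2 (by omega)⟩
    all_goals try (
      rw [← hlast]
      first
      | (have h := tail_get_ne p.support hnd (p.length - 1) 0 (by omega) (by omega) (by omega)
         have hfin : (⟨p.length - 1 + 1, by omega⟩ : Fin p.support.length) = ⟨p.length, by omega⟩ := by
           simp; omega
         rw [hfin] at h; exact h)
      | (have h := tail_get_ne p.support hnd (p.length - 1) 1 (by omega) (by omega) (by omega)
         have hfin : (⟨p.length - 1 + 1, by omega⟩ : Fin p.support.length) = ⟨p.length, by omega⟩ := by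
           simp; omega
         rw [hfin] at h; exact h)
      | (have h := tail_get_ne p.support hnd (p.length - 1) 2 (by omega) (by omega) (by omega)
         have hfin : (⟨p.length - 1 + 1, by omega⟩ : Fin p.support.length) = ⟨p.length, by omega⟩ := by
           simp; omega
         rw [hfin] at h; exact h))
    · exact tail_get_ne p.support hnd 0 1 (by omega) (by omega) (by omega)
    · exact tail_get_ne p.support hnd 0 2 (by omega) (by omega) (by omega)
    · exact tail_get_ne p.support hnd 1 2 (by omega) (by omega) (by omega)

private lemma c4_not_acyclic {V : Type*} {G : SimpleGraph V} {a b c d : V}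
    (hab' : a ≠ b) (hac' : a ≠ c) (had' : a ≠ d) (hbc' : b ≠ c) (hbd' : b ≠ d) (hcd' : c ≠ d)
    (hab : G.Adj a b) (hbc : G.Adj b c) (hcd : G.Adj c d) (hda : G.Adj d a) :
    ¬ G.IsAcyclic := by
  intro hac
  refine hac (Walk.cons hab (Walk.cons hbc (Walk.cons hcd (Walk.cons hda Walk.nil)))) ?_
  rw [Walk.isCycle_def, Walk.isTrail_def]
  refine ⟨?_, by simp, ?_⟩
  · simp [Sym2.eq_iff, hab', hac', had', hbc', hbd', hcd',
      hab'.symm, hac'.symm, had'.symm, hbc'.symm, hbd'.symm, hcd'.symm]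
  · simp [hab'.symm, hac'.symm, had'.symm, hbc', hbd', hcd']

private lemma star_imp_acyclic {V α : Type*} {G : SimpleGraph V} {φ : V → α}
    (h : IsStarColoring G φ) : IsAcyclicColoring G φ := by
  refine ⟨h.1, fun c₁ c₂ v p hp => ?_⟩
  rcases cycle_alt hp with hP4 | ⟨a, b, c, hab, hbc, hca⟩
  · exact h.2 c₁ c₂ hP4
  · have ha := a.2; have hb := b.2; have hc := c.2
    have h1 : φ ↑a ≠ φ ↑b := h.1 hab
    have h2 : φ ↑b ≠ φ ↑c := h.1 hbc
    have h3 : φ ↑c ≠ φ ↑a := h.1 hca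
    simp only [Set.mem_setOf_eq] at ha hb hc
    rcases ha with ha | ha <;> rcases hb with hb | hb <;> rcases hc with hc | hc <;>
      simp_all

private lemma acyclic_imp_star_of_cograph {V α : Type*} {G : SimpleGraph V} (hG : IsCograph G)
    {φ : V → α} (h : IsAcyclicColoring G φ) : IsStarColoring G φ := by
  refine ⟨h.1, fun c₁ c₂ hP4 => ?_⟩
  obtain ⟨a, b, c, d, hab', hac', had', hbc', hbd', hcd', hab, hbc, hcd⟩ := hP4
  have gab : G.Adj ↑a ↑b := hab
  have gbc : G.Adj ↑b ↑c := hbc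
  have gcd : G.Adj ↑c ↑d := hcd
  have ha := a.2; have hb := b.2; have hc := c.2; have hd := d.2
  simp only [Set.mem_setOf_eq] at ha hb hc hd
  have p1 : φ ↑a ≠ φ ↑b := h.1 gab
  have p2 : φ ↑b ≠ φ ↑c := h.1 gbc
  have p3 : φ ↑c ≠ φ ↑d := h.1 gcd
  have hac : φ ↑a = φ ↑c := by
    rcases ha with h1|h1 <;> rcases hb with h2|h2 <;> rcases hc with h3|h3 <;> simp_all
  have hbd : φ ↑b = φ ↑d := by
    rcases hb with h1|h1 <;> rcases hc with h2|h2 <;> rcases hd with h3|h3 <;> simp_all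
  have gad : G.Adj ↑a ↑d := by
    by_contra gad
    exact hG ⟨↑a, ↑b, ↑c, ↑d, Subtype.coe_ne_coe.mpr hab', Subtype.coe_ne_coe.mpr hac',
      Subtype.coe_ne_coe.mpr had', Subtype.coe_ne_coe.mpr hbc', Subtype.coe_ne_coe.mpr hbd',
      Subtype.coe_ne_coe.mpr hcd', gab, gbc, gcd,
      fun hx => absurd hac (h.1 hx), gad, fun hx => absurd hbd (h.1 hx)⟩
  exact c4_not_acyclic hab' hac' had' hbc' hbd' hcd' hab hbc hcd
    (show (G.induce {v | φ v = c₁ ∨ φ v = c₂}).Adj d a from gad.symm) (h.2 c₁ c₂)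

/-- For every cograph, the star chromatic number equals the acyclic
chromatic number. -/
theorem starChromaticNumber_eq_acyclicChromaticNumber_of_cograph {V : Type*} [Fintype V]
    (G : SimpleGraph V) (hG : IsCograph G) :
    starChromaticNumber G = acyclicChromaticNumber G := by
  have hset : {n : ℕ | ∃ φ : V → Fin n, IsStarColoring G φ} =
      {n : ℕ | ∃ φ : V → Fin n, IsAcyclicColoring G φ} := by
    ext n
    exact ⟨fun ⟨φ, hφ⟩ => ⟨φ, star_imp_acyclic hφ⟩,
           fun ⟨φ, hφ⟩ => ⟨φ, acyclic_imp_star_of_cograph hG hφ⟩⟩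
  unfold starChromaticNumber acyclicChromaticNumber
  rw [hset]
end

section
/- For any finite simple graphs G1 = (V1, E1) and G2 = (V2, E2) on disjoint vertex sets, the acyclic chromatic number of their join satisfies χ_a(G1 ⋈ G2) = min{χ_a(G1) + |V2|, χ_a(G2) + |V1|}. -/
open SimpleGraph

section AuxAcyclic

open Function

lemma isAcyclic_of_injHom {V W : Type*} {G : SimpleGraph V} {H : SimpleGraph W}
    (f : G →g H) (hf : Function.Injective f) (h : H.IsAcyclic) : G.IsAcyclic :=
  fun _ p hp => h (p.map f) (hp.map hf)

lemma isAcyclic_induce_mono {V : Type*} {G : SimpleGraph V} {S T : Set V}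
    (hST : S ⊆ T) (h : (G.induce T).IsAcyclic) : (G.induce S).IsAcyclic :=
  isAcyclic_of_injHom ⟨Set.inclusion hST, fun hadj => hadj⟩
    (Set.inclusion_injective hST) h

lemma isAcyclic_of_two {V : Type*} {G : SimpleGraph V}
    (h : ∀ x y z : V, x = y ∨ x = z ∨ y = z) : G.IsAcyclic := by
  intro v p hp
  have h3 : 3 ≤ p.length := hp.three_le_length
  have hnd : p.support.tail.Nodup := hp.2
  have hlen : p.support.tail.length = p.length := by
    rw [List.length_tail, SimpleGraph.Walk.length_support]; omega
  rcases hl : p.support.tail with _ | ⟨x, _ | ⟨y, _ | ⟨z, rest⟩⟩⟩ <;>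
      rw [hl] at hnd hlen <;> simp only [List.length_nil, List.length_cons] at hlen
  · omega
  · omega
  · omega
  · simp only [List.nodup_cons, List.mem_cons] at hnd
    rcases h x y z with h' | h' | h' <;> simp_all

lemma isAcyclic_of_star {V : Type*} {G : SimpleGraph V} (r : V)
    (h : ∀ a b : V, G.Adj a b → a = r ∨ b = r) : G.IsAcyclic := by
  classical
  intro v p hp
  have hr : r ∈ p.support := by
    cases p with
    | nil => exact absurd rfl hp.ne_nil
    | @cons _ x _ hadj q =>
      rcases h _ _ hadj with h1 | h1
      · rw [← h1]; exact SimpleGraph.Walk.start_mem_support _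
      · rw [SimpleGraph.Walk.support_cons, ← h1]
        exact List.mem_cons_of_mem _ q.start_mem_support
  obtain ⟨q, hq⟩ : ∃ q : G.Walk r r, q.IsCycle := ⟨p.rotate r hr, hp.rotate hr⟩
  clear hr hp p v
  cases q with
  | nil => exact hq.ne_nil rfl
  | @cons _ x _ h₁ q₁ =>
    cases q₁ with
    | nil => exact h₁.ne rfl
    | @cons _ y _ h₂ q₂ =>
      have hy : y = r := (h _ _ h₂).resolve_left h₁.ne'
      subst hy
      cases q₂ with
      | nil =>
        have := hq.three_le_length
        simp [SimpleGraph.Walk.length_cons] at this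
      | @cons _ z _ h₃ q₃ =>
        have hnd := hq.2
        have hmem : y ∈ q₃.support := q₃.end_mem_support
        simp only [SimpleGraph.Walk.support_cons, List.tail_cons, List.nodup_cons] at hnd
        simp_all

lemma IsAcyclicColoring.comp_hom {V W α : Type*} {G : SimpleGraph V} {H : SimpleGraph W}
    {φ : W → α} (hφ : IsAcyclicColoring H φ) (f : G →g H) (hf : Function.Injective f) :
    IsAcyclicColoring G (φ ∘ f) := by
  constructor
  · intro u v huv
    exact hφ.1 (f.map_adj huv)
  · intro c₁ c₂
    refine isAcyclic_of_injHom (H := H.induce {w | φ w = c₁ ∨ φ w = c₂})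
      ⟨fun a => ⟨f a.1, a.2⟩, fun hadj => f.map_adj hadj⟩ ?_ (hφ.2 c₁ c₂)
    intro a b hab
    exact Subtype.ext (hf (congrArg Subtype.val hab))

lemma isAcyclicColoring_of_injective {V α : Type*} (G : SimpleGraph V) {φ : V → α}
    (hφ : Function.Injective φ) : IsAcyclicColoring G φ := by
  refine ⟨fun u v huv he => huv.ne (hφ he), fun c₁ c₂ => isAcyclic_of_two ?_⟩
  rintro ⟨x, hx⟩ ⟨y, hy⟩ ⟨z, hz⟩
  simp only [Set.mem_setOf_eq] at hx hy hz
  rcases hx with hx | hx <;> rcases hy with hy | hy <;> rcases hz with hz | hz <;>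
    first
      | (exact Or.inl (Subtype.ext (hφ (hx.trans hy.symm))))
      | (exact Or.inr (Or.inl (Subtype.ext (hφ (hx.trans hz.symm)))))
      | (exact Or.inr (Or.inr (Subtype.ext (hφ (hy.trans hz.symm)))))

lemma join_induce_inl {V₁ V₂ : Type*} {G₁ : SimpleGraph V₁} (G₂ : SimpleGraph V₂)
    {A : Set V₁} (h : (G₁.induce A).IsAcyclic) :
    ((G₁.join G₂).induce (Sum.inl '' A)).IsAcyclic := by
  refine isAcyclic_of_injHom (H := G₁.induce A)
    ⟨fun a => ⟨a.2.choose, a.2.choose_spec.1⟩, ?_⟩ ?_ h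
  · intro a b hadj
    have ha := a.2.choose_spec.2
    have hb := b.2.choose_spec.2
    change (G₁.join G₂).Adj a.1 b.1 at hadj
    rw [← ha, ← hb] at hadj
    exact hadj
  · intro a b hab
    have ha := a.2.choose_spec.2
    have hb := b.2.choose_spec.2
    have : (a.2.choose : V₁) = b.2.choose := congrArg Subtype.val hab
    apply Subtype.ext
    rw [← ha, ← hb, this]

lemma join_upper {V₁ V₂ : Type*} [Fintype V₁] [Fintype V₂]
    (G₁ : SimpleGraph V₁) (G₂ : SimpleGraph V₂) {k : ℕ} (φ₁ : V₁ → Fin k)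
    (h₁ : IsAcyclicColoring G₁ φ₁) :
    ∃ ψ : V₁ ⊕ V₂ → Fin (k + Fintype.card V₂),
      IsAcyclicColoring (G₁.join G₂) ψ := by
  set m := Fintype.card V₂ with hm
  let e := Fintype.equivFin V₂
  set ψ : V₁ ⊕ V₂ → Fin (k + m) :=
    Sum.elim (fun v => Fin.castAdd m (φ₁ v)) (fun w => Fin.natAdd k (e w)) with hψ
  have hψl : ∀ v : V₁, (ψ (Sum.inl v) : ℕ) = (φ₁ v : ℕ) := fun v => rfl
  have hψr : ∀ w : V₂, (ψ (Sum.inr w) : ℕ) = k + (e w : ℕ) := fun w => rfl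
  refine ⟨ψ, ?_, ?_⟩
  · rintro (u | u) (v | v) hadj he
    · exact h₁.1 hadj (Fin.ext (by rw [← hψl u, ← hψl v, he]))
    · have := congrArg Fin.val he
      rw [hψl, hψr] at this
      omega
    · have := congrArg Fin.val he
      rw [hψr, hψl] at this
      omega
    · have := congrArg Fin.val he
      rw [hψr, hψr] at this
      have : e u = e v := Fin.ext (by omega)
      exact (G₂.ne_of_adj hadj) (e.injective this)
  · have mixed : ∀ c₁ c₂ : Fin (k + m), (c₁ : ℕ) < k → ¬ ((c₂ : ℕ) < k) →
        ((G₁.join G₂).induce {x | ψ x = c₁ ∨ ψ x = c₂}).IsAcyclic := by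
      intro c₁ c₂ hc₁ hc₂
      set w₀ : V₂ := e.symm ⟨(c₂ : ℕ) - k, by omega⟩ with hw₀
      have hS : {x | ψ x = c₁ ∨ ψ x = c₂} ⊆
          (Sum.inl '' {v | φ₁ v = ⟨c₁, hc₁⟩}) ∪ {Sum.inr w₀} := by
        rintro (v | w) (hx | hx)
        · exact Or.inl ⟨v, Fin.ext (by have := congrArg Fin.val hx; rw [hψl] at this; exact this), rfl⟩
        · exfalso; have := congrArg Fin.val hx; rw [hψl] at this
          have hlt := (φ₁ v).isLt; omega
        · exfalso; have := congrArg Fin.val hx; rw [hψr] at this; omega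
        · refine Or.inr ?_
          have := congrArg Fin.val hx; rw [hψr] at this
          have hw : e w = ⟨(c₂ : ℕ) - k, by omega⟩ := Fin.ext (show (e w : ℕ) = (c₂ : ℕ) - k by omega)
          simp only [Set.mem_singleton_iff]
          rw [hw₀, ← hw, e.symm_apply_apply]
      refine isAcyclic_induce_mono hS (isAcyclic_of_star
        (⟨Sum.inr w₀, Or.inr rfl⟩ : ((Sum.inl '' {v | φ₁ v = ⟨c₁, hc₁⟩}) ∪ {Sum.inr w₀} : Set (V₁ ⊕ V₂))) ?_)
      rintro ⟨(a | a), ha⟩ ⟨(b | b), hb⟩ hadj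
      · exfalso
        obtain ⟨a', ha', haa⟩ := ha.resolve_right (by simp)
        obtain ⟨b', hb', hbb⟩ := hb.resolve_right (by simp)
        have hGadj : G₁.Adj a b := hadj
        exact h₁.1 hGadj (by
          have h1 : φ₁ a = ⟨c₁, hc₁⟩ := by
            exact Sum.inl_injective haa ▸ ha'
          have h2 : φ₁ b = ⟨c₁, hc₁⟩ := by
            exact Sum.inl_injective hbb ▸ hb'
          rw [h1, h2])
      · right
        have : Sum.inr b = Sum.inr w₀ := hb.resolve_left (by rintro ⟨x, _, hx⟩; exact Sum.inl_ne_inr hx)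
        exact Subtype.ext this
      · left
        have : Sum.inr a = Sum.inr w₀ := ha.resolve_left (by rintro ⟨x, _, hx⟩; exact Sum.inl_ne_inr hx)
        exact Subtype.ext this
      · left
        have : Sum.inr a = Sum.inr w₀ := ha.resolve_left (by rintro ⟨x, _, hx⟩; exact Sum.inl_ne_inr hx)
        exact Subtype.ext this
    intro c₁ c₂
    by_cases hc₁ : (c₁ : ℕ) < k <;> by_cases hc₂ : (c₂ : ℕ) < k
    · have hS : {x | ψ x = c₁ ∨ ψ x = c₂} ⊆
          Sum.inl '' {v | φ₁ v = ⟨(c₁ : ℕ), hc₁⟩ ∨ φ₁ v = ⟨(c₂ : ℕ), hc₂⟩} := by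
        rintro (v | w) hx
        · refine ⟨v, ?_, rfl⟩
          rcases hx with hx | hx
          · exact Or.inl (Fin.ext (by have := congrArg Fin.val hx; rw [hψl] at this; exact this))
          · exact Or.inr (Fin.ext (by have := congrArg Fin.val hx; rw [hψl] at this; exact this))
        · exfalso
          rcases hx with hx | hx <;>
            · have := congrArg Fin.val hx; rw [hψr] at this; omega
      exact isAcyclic_induce_mono hS (join_induce_inl G₂ (h₁.2 _ _))
    · exact mixed c₁ c₂ hc₁ hc₂
    · have hcomm : {x | ψ x = c₁ ∨ ψ x = c₂} = {x | ψ x = c₂ ∨ ψ x = c₁} := by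
        ext x; exact or_comm
      rw [hcomm]
      exact mixed c₂ c₁ hc₂ hc₁
    · refine isAcyclic_of_two ?_
      have key : ∀ x : {x // x ∈ {x | ψ x = c₁ ∨ ψ x = c₂}},
          x.1 = Sum.inr (e.symm ⟨(c₁ : ℕ) - k, by omega⟩) ∨
          x.1 = Sum.inr (e.symm ⟨(c₂ : ℕ) - k, by omega⟩) := by
        rintro ⟨(v | w), hx⟩
        · exfalso
          rcases hx with hx | hx <;>
            · have := congrArg Fin.val hx; rw [hψl] at this
              have hlt := (φ₁ v).isLt; omega
        · rcases hx with hx | hx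
          · left
            have := congrArg Fin.val hx; rw [hψr] at this
            have hw : e w = ⟨(c₁ : ℕ) - k, by omega⟩ := Fin.ext (show (e w : ℕ) = (c₁ : ℕ) - k by omega)
            rw [← hw, e.symm_apply_apply]
          · right
            have := congrArg Fin.val hx; rw [hψr] at this
            have hw : e w = ⟨(c₂ : ℕ) - k, by omega⟩ := Fin.ext (show (e w : ℕ) = (c₂ : ℕ) - k by omega)
            rw [← hw, e.symm_apply_apply]
      intro x y z
      rcases key x with hx | hx <;> rcases key y with hy | hy <;> rcases key z with hz | hz <;>
        first
          | (exact Or.inl (Subtype.ext (hx.trans hy.symm)))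
          | (exact Or.inr (Or.inl (Subtype.ext (hx.trans hz.symm))))
          | (exact Or.inr (Or.inr (Subtype.ext (hy.trans hz.symm))))

/-- The left inclusion as a graph homomorphism into the join. -/
def joinInlHom {V₁ V₂ : Type*} (G₁ : SimpleGraph V₁) (G₂ : SimpleGraph V₂) :
    G₁ →g G₁.join G₂ :=
  ⟨Sum.inl, fun h => h⟩

/-- Swapping the two sides of a join is a graph homomorphism. -/
def joinSwapHom {V₁ V₂ : Type*} (G₁ : SimpleGraph V₁) (G₂ : SimpleGraph V₂) :
    G₁.join G₂ →g G₂.join G₁ where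
  toFun := Sum.swap
  map_rel' := by rintro (a | a) (b | b) h <;> exact h

lemma key_lower {V₁ V₂ : Type*} [Fintype V₁] [Fintype V₂]
    (G₁ : SimpleGraph V₁) (G₂ : SimpleGraph V₂) {n : ℕ} (φ : V₁ ⊕ V₂ → Fin n)
    (hφ : IsAcyclicColoring (G₁.join G₂) φ)
    (hinj : Function.Injective (φ ∘ Sum.inr)) :
    acyclicChromaticNumber G₁ + Fintype.card V₂ ≤ n := by
  classical
  set m := Fintype.card V₂ with hm
  have hmn : m ≤ n := by
    have := Fintype.card_le_of_injective _ hinj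
    simpa using this
  set T : Finset (Fin n) := (Finset.univ.image (fun v => φ (Sum.inr v)))ᶜ with hT
  have hmemT : ∀ v : V₁, φ (Sum.inl v) ∈ T := by
    intro v
    simp only [hT, Finset.mem_compl, Finset.mem_image, not_exists]
    rintro w ⟨-, hw⟩
    exact hφ.1 (show (G₁.join G₂).Adj (Sum.inl v) (Sum.inr w) from trivial) hw.symm
  have hcardT : Fintype.card {x // x ∈ T} = n - m := by
    rw [Fintype.card_coe, hT, Finset.card_compl,
      Finset.card_image_of_injective _ (show Function.Injective (fun v => φ (Sum.inr v)) from hinj)]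
    simp
    rfl
  let e : {x // x ∈ T} ≃ Fin (n - m) := Fintype.equivFinOfCardEq hcardT
  set ψ : V₁ → Fin (n - m) := fun v => e ⟨φ (Sum.inl v), hmemT v⟩ with hψ
  have hψc : ∀ (v : V₁) (c : Fin (n - m)), ψ v = c ↔ φ (Sum.inl v) = (e.symm c).1 := by
    intro v c
    rw [hψ]
    rw [Equiv.apply_eq_iff_eq_symm_apply]
    exact Subtype.ext_iff
  have hIncl : IsAcyclicColoring G₁ (φ ∘ Sum.inl) :=
    hφ.comp_hom (joinInlHom G₁ G₂) Sum.inl_injective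
  have hac : IsAcyclicColoring G₁ ψ := by
    constructor
    · intro u v huv he
      have h1 : φ (Sum.inl u) = φ (Sum.inl v) := by
        have := (hψc u (ψ v)).mp he
        have h2 := (hψc v (ψ v)).mp rfl
        rw [this, h2]
      exact hIncl.1 huv h1
    · intro c₁ c₂
      have hset : {v | ψ v = c₁ ∨ ψ v = c₂} =
          {v | (φ ∘ Sum.inl) v = (e.symm c₁).1 ∨ (φ ∘ Sum.inl) v = (e.symm c₂).1} := by
        ext v
        simp only [Set.mem_setOf_eq, Function.comp_apply, hψc]
      rw [hset]
      exact hIncl.2 _ _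
  have h1 : acyclicChromaticNumber G₁ ≤ n - m := Nat.sInf_le ⟨ψ, hac⟩
  omega

lemma join_four_cycle {V₁ V₂ : Type*} {G₁ : SimpleGraph V₁} {G₂ : SimpleGraph V₂}
    {α : Type*} {φ : V₁ ⊕ V₂ → α} (hφ : IsAcyclicColoring (G₁.join G₂) φ)
    {u u' : V₁} {v v' : V₂} (huu' : u ≠ u') (hvv' : v ≠ v')
    (hcu : φ (Sum.inl u) = φ (Sum.inl u')) (hcv : φ (Sum.inr v) = φ (Sum.inr v')) :
    False := by
  set c₁ := φ (Sum.inl u) with hc₁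
  set c₂ := φ (Sum.inr v) with hc₂
  set S : Set (V₁ ⊕ V₂) := {x | φ x = c₁ ∨ φ x = c₂} with hS
  set H := (G₁.join G₂).induce S with hH
  let a : S := ⟨Sum.inl u, Or.inl rfl⟩
  let b : S := ⟨Sum.inr v, Or.inr rfl⟩
  let c : S := ⟨Sum.inl u', Or.inl hcu.symm⟩
  let d : S := ⟨Sum.inr v', Or.inr hcv.symm⟩
  have hab : H.Adj a b := trivial
  have hbc : H.Adj b c := trivial
  have hcd : H.Adj c d := trivial
  have hda : H.Adj d a := trivial
  have hac : a ≠ c := fun h => huu' (Sum.inl_injective (congrArg Subtype.val h))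
  have hbd : b ≠ d := fun h => hvv' (Sum.inr_injective (congrArg Subtype.val h))
  have hab' : a ≠ b := fun h => Sum.inl_ne_inr (congrArg Subtype.val h)
  have had' : a ≠ d := fun h => Sum.inl_ne_inr (congrArg Subtype.val h)
  have hcb' : c ≠ b := fun h => Sum.inl_ne_inr (congrArg Subtype.val h)
  have hcd' : c ≠ d := fun h => Sum.inl_ne_inr (congrArg Subtype.val h)
  let w : H.Walk a a :=
    Walk.cons hab (Walk.cons hbc (Walk.cons hcd (Walk.cons hda Walk.nil)))
  have hw : w.IsCycle := by
    rw [Walk.isCycle_def]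
    refine ⟨?_, by simp [w], ?_⟩
    · rw [Walk.isTrail_def]
      simp only [w, Walk.edges_cons, Walk.edges_nil, List.nodup_cons, List.mem_cons,
        List.not_mem_nil, List.nodup_nil, or_false, and_true]
      simp [Sym2.eq_iff]
      refine ⟨⟨?_, ?_, ?_⟩, ?_, ?_⟩ <;> tauto
    · simp only [w, Walk.support_cons, Walk.support_nil, List.tail_cons]
      simp [List.nodup_cons]
      tauto
  exact hφ.2 c₁ c₂ w hw

end AuxAcyclic

/-- The acyclic chromatic number of a join:
`χₐ(G₁ ⋈ G₂) = min (χₐ(G₁) + |V₂|) (χₐ(G₂) + |V₁|)`. -/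
theorem acyclicChromaticNumber_join {V₁ V₂ : Type*} [Fintype V₁] [Fintype V₂]
    (G₁ : SimpleGraph V₁) (G₂ : SimpleGraph V₂) :
    acyclicChromaticNumber (G₁.join G₂) =
      min (acyclicChromaticNumber G₁ + Fintype.card V₂)
        (acyclicChromaticNumber G₂ + Fintype.card V₁) := by
  classical
  have hne1 : {n : ℕ | ∃ φ : V₁ → Fin n, IsAcyclicColoring G₁ φ}.Nonempty :=
    ⟨Fintype.card V₁, fun v => Fintype.equivFin V₁ v,
      isAcyclicColoring_of_injective _ (Fintype.equivFin V₁).injective⟩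
  have hne2 : {n : ℕ | ∃ φ : V₂ → Fin n, IsAcyclicColoring G₂ φ}.Nonempty :=
    ⟨Fintype.card V₂, fun v => Fintype.equivFin V₂ v,
      isAcyclicColoring_of_injective _ (Fintype.equivFin V₂).injective⟩
  have hneJ : {n : ℕ | ∃ φ : V₁ ⊕ V₂ → Fin n, IsAcyclicColoring (G₁.join G₂) φ}.Nonempty :=
    ⟨Fintype.card (V₁ ⊕ V₂), fun v => Fintype.equivFin (V₁ ⊕ V₂) v,
      isAcyclicColoring_of_injective _ (Fintype.equivFin (V₁ ⊕ V₂)).injective⟩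
  apply le_antisymm
  · apply le_min
    · obtain ⟨φ₁, h₁⟩ := Nat.sInf_mem hne1
      obtain ⟨ψ, hψ⟩ := join_upper G₁ G₂ φ₁ h₁
      exact Nat.sInf_le ⟨ψ, hψ⟩
    · obtain ⟨φ₂, h₂⟩ := Nat.sInf_mem hne2
      obtain ⟨ψ, hψ⟩ := join_upper G₂ G₁ φ₂ h₂
      exact Nat.sInf_le ⟨ψ ∘ (joinSwapHom G₁ G₂),
        hψ.comp_hom (joinSwapHom G₁ G₂) Sum.swap_leftInverse.injective⟩
  · obtain ⟨φ, hφ⟩ := Nat.sInf_mem hneJ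
    by_cases h2 : Function.Injective (φ ∘ Sum.inr)
    · exact le_trans (min_le_left _ _) (key_lower G₁ G₂ φ hφ h2)
    · by_cases h1 : Function.Injective (φ ∘ Sum.inl)
      · refine le_trans (min_le_right _ _) ?_
        have hsw : IsAcyclicColoring (G₂.join G₁) (φ ∘ (joinSwapHom G₂ G₁)) :=
          hφ.comp_hom (joinSwapHom G₂ G₁) Sum.swap_leftInverse.injective
        exact key_lower G₂ G₁ _ hsw h1
      · exfalso
        obtain ⟨x, y, hxy, hne⟩ := Function.not_injective_iff.mp h2
        obtain ⟨x', y', hxy', hne'⟩ := Function.not_injective_iff.mp h1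
        exact join_four_cycle hφ hne' hne hxy' hxy
end

section
/- Let G1 = (V1, E1) and G2 = (V2, E2) be finite simple graphs on disjoint vertex sets and let φ be an acyclic coloring of their join G1 ⋈ G2. Then the sets of colors assigned by φ to V1 and to V2 are disjoint, and moreover φ assigns pairwise distinct colors to all vertices of V1 or φ assigns pairwise distinct colors to all vertices of V2. -/
open SimpleGraph

/-- In any acyclic coloring of a join, the two sides receive disjoint sets
of colors, and at least one side is rainbow (all its vertices get pairwise distinct
colors). -/
theorem acyclicColoring_join_disjoint_and_saturated {V₁ V₂ : Type*}
    [Fintype V₁] [Fintype V₂] (G₁ : SimpleGraph V₁) (G₂ : SimpleGraph V₂)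
    (φ : V₁ ⊕ V₂ → ℕ) (hφ : IsAcyclicColoring (G₁.join G₂) φ) :
    (∀ (a : V₁) (b : V₂), φ (Sum.inl a) ≠ φ (Sum.inr b)) ∧
      (Function.Injective (fun a : V₁ => φ (Sum.inl a)) ∨
        Function.Injective (fun b : V₂ => φ (Sum.inr b))) := by
  obtain ⟨hp, hac⟩ := hφ
  have hdisj : ∀ (a : V₁) (b : V₂), φ (Sum.inl a) ≠ φ (Sum.inr b) := by
    intro a b
    exact hp (show (G₁.join G₂).Adj (Sum.inl a) (Sum.inr b) from trivial)
  refine ⟨hdisj, ?_⟩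
  by_contra h
  push_neg at h
  obtain ⟨h1, h2⟩ := h
  rw [Function.not_injective_iff] at h1 h2
  obtain ⟨a, a', ha, haa⟩ := h1
  obtain ⟨b, b', hb, hbb⟩ := h2
  set c₁ := φ (Sum.inl a) with hc1
  set c₂ := φ (Sum.inr b) with hc2
  set S : Set (V₁ ⊕ V₂) := {v | φ v = c₁ ∨ φ v = c₂} with hS
  let A : S := ⟨Sum.inl a, Or.inl rfl⟩
  let A' : S := ⟨Sum.inl a', Or.inl ha.symm⟩
  let B : S := ⟨Sum.inr b, Or.inr rfl⟩
  let B' : S := ⟨Sum.inr b', Or.inr hb.symm⟩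
  have adjAB : ((G₁.join G₂).induce S).Adj A B := trivial
  have adjBA' : ((G₁.join G₂).induce S).Adj B A' := trivial
  have adjA'B' : ((G₁.join G₂).induce S).Adj A' B' := trivial
  have adjB'A : ((G₁.join G₂).induce S).Adj B' A := trivial
  let w : ((G₁.join G₂).induce S).Walk A A :=
    Walk.cons adjAB (Walk.cons adjBA' (Walk.cons adjA'B' (Walk.cons adjB'A Walk.nil)))
  have hne1 : A ≠ A' := by simp [A, A', Subtype.ext_iff, haa]
  have hne2 : B ≠ B' := by simp [B, B', Subtype.ext_iff, hbb]
  have hcyc : w.IsCycle := by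
    constructor
    · constructor
      · constructor
        simp only [w, Walk.edges_cons, Walk.edges_nil, List.nodup_cons, List.mem_cons,
          List.not_mem_nil, List.nodup_nil, Sym2.eq, Sym2.rel_iff', Subtype.ext_iff]
        simp [A, A', B, B']
        tauto
      · simp [w]
    · simp [w, Walk.support, List.nodup_cons, hne1.symm, hne2.symm, hne1, hne2,
        A, A', B, B', Subtype.ext_iff, haa, hbb]
  exact hac c₁ c₂ w hcyc
end

section
/- Let G be a finite simple graph and let G+ be a triangulation of G, i.e., a chordal graph on the same vertex set whose edge set contains that of G. Then every proper vertex coloring of G+ is an acyclic coloring of G. -/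
open SimpleGraph

lemma myGetVert_mem_support {V : Type*} {G : SimpleGraph V} {u v : V}
    (p : G.Walk u v) (i : ℕ) : p.getVert i ∈ p.support := by
  induction p generalizing i with
  | nil => simp [Walk.getVert]
  | cons h p ih =>
    cases i with
    | zero => simp [Walk.getVert]
    | succ n => simp only [Walk.getVert, Walk.support_cons, List.mem_cons]; exact Or.inr (ih n)

/-- From a cycle with a chord, obtain paths; key splitting facts. -/
lemma cycle_split {V : Type*} [DecidableEq V] {H : SimpleGraph V} {u w : V}
    (q : H.Walk u u) (hq : q.IsCycle) (hw : w ∈ q.support) (hne : w ≠ u) :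
    (q.takeUntil w hw).IsPath ∧ (q.dropUntil w hw).IsPath := by
  set t := q.takeUntil w hw with ht
  set d := q.dropUntil w hw with hd
  have hspec : t.append d = q := q.take_spec hw
  have hsupp : q.support.tail = t.support.tail ++ d.support.tail := by
    conv_lhs => rw [← hspec]
    rw [Walk.support_append]
    rw [t.support_eq_cons]
    simp
  have hnd : q.support.tail.Nodup := hq.2
  rw [hsupp, List.nodup_append] at hnd
  obtain ⟨hnt, hnd2, hdisj⟩ := hnd
  have hu_mem_d : u ∈ d.support.tail := by
    have : u ∈ d.support := d.end_mem_support
    rw [d.support_eq_cons] at this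
    rcases List.mem_cons.mp this with h | h
    · exact absurd h.symm hne
    · exact h
  have hw_mem_t : w ∈ t.support.tail := by
    have : w ∈ t.support := t.end_mem_support
    rw [t.support_eq_cons] at this
    rcases List.mem_cons.mp this with h | h
    · exact absurd h hne
    · exact h
  constructor
  · rw [Walk.isPath_def, t.support_eq_cons, List.nodup_cons]
    exact ⟨fun h => hdisj u h u hu_mem_d rfl, hnt⟩
  · rw [Walk.isPath_def, d.support_eq_cons, List.nodup_cons]
    exact ⟨fun h => hdisj w hw_mem_t w h rfl, hnd2⟩

lemma myFirstEdge {V : Type*} {G : SimpleGraph V} {x y : V} (p : G.Walk x y)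
    (h : p.length = 1) : s(x, y) ∈ p.edges := by
  cases p with
  | nil => simp at h
  | cons had p' =>
    have h0 : p'.length = 0 := by simpa using h
    have := Walk.eq_of_length_eq_zero h0
    subst this
    simp

lemma no_two_colored_cycle {V : Type*} {H : SimpleGraph V} (hH : IsChordal H)
    {α : Type*} (φ : V → α) (hφ : ∀ ⦃u v : V⦄, H.Adj u v → φ u ≠ φ v) (c₁ c₂ : α) :
    ∀ (n : ℕ) (v : V) (p : H.Walk v v), p.length = n → p.IsCycle →
      (∀ x ∈ p.support, φ x = c₁ ∨ φ x = c₂) → False := by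
  classical
  intro n
  induction n using Nat.strong_induction_on with
  | _ n ih =>
    intro v p hlen hp hcol
    by_cases hind : ∀ a b : V, a ∈ p.support → b ∈ p.support → H.Adj a b → s(a, b) ∈ p.edges
    · -- induced cycle: length ≤ 3, so a triangle; impossible with 2 colors
      have h3 : p.length ≤ 3 := hH v p ⟨hp, hind⟩
      have h3' : 3 ≤ p.length := hp.three_le_length
      have hlen3 : p.length = 3 := le_antisymm h3 h3'
      set a := p.getVert 0 with ha
      set b := p.getVert 1 with hb
      set c := p.getVert 2 with hc
      have hab : H.Adj a b := p.adj_getVert_succ (by omega)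
      have hbc : H.Adj b c := p.adj_getVert_succ (by omega)
      have hca : H.Adj c a := by
        have h := p.adj_getVert_succ (i := 2) (by omega)
        have h4 : p.getVert 3 = v := by rw [← hlen3]; exact p.getVert_length
        rw [h4] at h
        rw [hc, ha, p.getVert_zero]
        exact h
      have hma := hcol a (myGetVert_mem_support p 0)
      have hmb := hcol b (myGetVert_mem_support p 1)
      have hmc := hcol c (myGetVert_mem_support p 2)
      have h1 := hφ hab
      have h2 := hφ hbc
      have h3'' := hφ hca
      rcases hma with h | h <;> rcases hmb with h' | h' <;> rcases hmc with h'' | h'' <;>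
        simp only [h, h', h'', ne_eq, not_true_eq_false] at h1 h2 h3''
    · -- there is a chord; build a strictly shorter 2-colored cycle
      push_neg at hind
      obtain ⟨a, b, hamem, hbmem, hadj, hchord⟩ := hind
      -- rotate so the cycle starts at a
      set q := p.rotate a hamem with hqdef
      have hq : q.IsCycle := hp.rotate hamem
      have hqlen : q.length = p.length := by
        have := congr_arg Walk.length (p.take_spec hamem)
        rw [Walk.length_append] at this
        rw [hqdef, Walk.rotate, Walk.length_append]
        omega
      have hsuppq : ∀ x, x ∈ q.support ↔ x ∈ p.support := by
        intro x
        constructor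
        · intro hx
          rcases List.mem_cons.mp (q.support_eq_cons ▸ hx) with rfl | hx'
          · exact hamem
          · exact List.mem_of_mem_tail ((p.support_rotate a hamem).mem_iff.mp hx')
        · intro hx
          rcases List.mem_cons.mp (p.support_eq_cons ▸ hx) with rfl | hx'
          · -- x = v : v is the start of `p.takeUntil a`, a subwalk of the rotation
            rw [hqdef, Walk.rotate, Walk.mem_support_append_iff]
            exact Or.inr (Walk.start_mem_support _)
          · exact List.mem_of_mem_tail ((p.support_rotate a hamem).mem_iff.mpr hx')
      have hbq : b ∈ q.support := (hsuppq b).mpr hbmem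
      have hchq : s(a, b) ∉ q.edges := fun h => hchord ((p.rotate_edges a hamem).mem_iff.mp h)
      have hneba : b ≠ a := hadj.ne.symm
      obtain ⟨htpath, hdpath⟩ := cycle_split q hq hbq hneba
      set t := q.takeUntil b hbq with htdef
      set d := q.dropUntil b hbq with hddef
      have hsum : t.length + d.length = q.length := by
        have h := congr_arg Walk.length (q.take_spec hbq)
        rw [Walk.length_append, ← htdef, ← hddef] at h
        omega
      -- d has length ≥ 2: else the chord would be an edge of q
      have hd2 : 2 ≤ d.length := by
        rcases Nat.lt_or_ge d.length 2 with hlt | hge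
        · exfalso
          have h0 : d.length ≠ 0 := fun h => hneba (Walk.eq_of_length_eq_zero h)
          have h1 : d.length = 1 := by omega
          have hed := myFirstEdge d h1
          apply hchq
          have h2 := q.edges_dropUntil_subset hbq
          rw [← hddef] at h2
          have h3 := h2 hed
          rwa [Sym2.eq_swap] at h3
        · exact hge
      -- the shorter cycle
      set c := Walk.cons hadj.symm t with hcdef
      have hccyc : c.IsCycle := by
        rw [hcdef, Walk.cons_isCycle_iff]
        refine ⟨htpath, fun h => hchq ?_⟩
        have := q.edges_takeUntil_subset hbq
        rw [← htdef] at this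
        have := this h
        rwa [Sym2.eq_swap] at this
      have hclen : c.length < n := by
        rw [hcdef, Walk.length_cons]
        omega
      have hccol : ∀ x ∈ c.support, φ x = c₁ ∨ φ x = c₂ := by
        intro x hx
        rw [hcdef, Walk.support_cons] at hx
        rcases List.mem_cons.mp hx with rfl | hx'
        · exact hcol x hbmem
        · have : x ∈ q.support := by
            have := q.support_takeUntil_subset hbq
            rw [← htdef] at this
            exact this hx'
          exact hcol x ((hsuppq x).mp this)
      exact ih c.length hclen b c rfl hccyc hccol

/-- Every proper coloring of a triangulation (chordal supergraph on the
same vertex set) of `G` is an acyclic coloring of `G`. -/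
theorem isAcyclicColoring_of_proper_coloring_of_triangulation {V : Type*} [Fintype V]
    (G H : SimpleGraph V) (hGH : G ≤ H) (hH : IsChordal H)
    (φ : V → ℕ) (hφ : IsProperColoring H φ) :
    IsAcyclicColoring G φ := by
  classical
  refine ⟨fun u v h => hφ (hGH h), ?_⟩
  intro c₁ c₂ v p hp
  set S : Set V := {v | φ v = c₁ ∨ φ v = c₂} with hS
  let f : G.induce S →g H := (Hom.ofLE hGH).comp (Embedding.induce S).toHom
  have hfinj : Function.Injective f := fun x y hxy => Subtype.ext hxy
  have hcyc := hp.map (f := f) hfinj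
  apply no_two_colored_cycle hH φ hφ c₁ c₂ (p.map f).length _ (p.map f) rfl hcyc
  intro x hx
  rw [Walk.support_map] at hx
  obtain ⟨y, hy, rfl⟩ := List.mem_map.mp hx
  exact y.2
end

section
/- Let G be a cograph and let φ be a proper vertex coloring of G. Then φ is an acyclic coloring of G if and only if there exists a triangulation G+ of G (a chordal graph on the same vertex set whose edge set contains that of G) such that φ is a proper coloring of G+. -/
open SimpleGraph

namespace AuxCograph

variable {V : Type*}


variable {V : Type*}

/-- Restriction of a graph to a finite vertex set (other vertices become isolated). -/
def restrict (G : SimpleGraph V) (s : Finset V) : SimpleGraph V where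
  Adj u v := G.Adj u v ∧ u ∈ s ∧ v ∈ s
  symm := ⟨fun u v ⟨h, hu, hv⟩ => ⟨h.symm, hv, hu⟩⟩
  loopless := ⟨fun u ⟨h, _, _⟩ => G.irrefl h⟩

lemma restrict_le (G : SimpleGraph V) (s : Finset V) : restrict G s ≤ G :=
  fun _ _ h => h.1

lemma restrict_adj {G : SimpleGraph V} {s : Finset V} {u v : V} :
    (restrict G s).Adj u v ↔ G.Adj u v ∧ u ∈ s ∧ v ∈ s := Iff.rfl

/-- Walk closure: sets closed under adjacency absorb reachability. -/
lemma mem_of_reachable {K : SimpleGraph V} {C : Set V}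
    (hC : ∀ ⦃y z : V⦄, y ∈ C → K.Adj y z → z ∈ C) {x y : V}
    (h : K.Reachable x y) (hx : x ∈ C) : y ∈ C := by
  obtain ⟨w⟩ := h
  induction w with
  | nil => exact hx
  | cons h p ih => exact ih (hC hx h)

/-- Along a walk from a `P`-vertex to a non-`P` vertex there is a switching edge. -/
lemma exists_switch_edge {K : SimpleGraph V} {P : V → Prop} :
    ∀ {x y : V} (w : K.Walk x y), P x → ¬ P y →
    ∃ p q, K.Adj p q ∧ P p ∧ ¬ P q := by
  intro x y w
  induction w with
  | nil => intro hx hy; exact absurd hx hy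
  | @cons a b c h p ih =>
    intro hx hy
    by_cases hb : P b
    · exact ih hb hy
    · exact ⟨a, b, h, hx, hb⟩

/-- Every vertex of a walk is either the end or lies on an edge of the walk. -/
lemma support_edge {K : SimpleGraph V} :
    ∀ {a b : V} (p : K.Walk a b) (x : V), x ∈ p.support →
      x = b ∨ ∃ y, K.Adj x y ∧ s(x, y) ∈ p.edges := by
  intro a b p
  induction p with
  | nil => intro x hx; left; simpa using hx
  | @cons a c b h q ih =>
    intro x hx
    rw [SimpleGraph.Walk.support_cons, List.mem_cons] at hx
    rcases hx with rfl | hx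
    · exact Or.inr ⟨c, h, by simp⟩
    · rcases ih x hx with h' | ⟨y, hy, he⟩
      · exact Or.inl h'
      · exact Or.inr ⟨y, hy, by simp [he]⟩

/-- If adjacency preserves membership in `S`, so does a walk. -/
lemma support_subset_of_adj_iff {K : SimpleGraph V} {S : Set V}
    (hcoh : ∀ ⦃u w : V⦄, K.Adj u w → (u ∈ S ↔ w ∈ S)) :
    ∀ {a b : V} (p : K.Walk a b), a ∈ S → ∀ x ∈ p.support, x ∈ S := by
  intro a b p
  induction p with
  | nil =>
    intro ha x hx
    simp only [SimpleGraph.Walk.support_nil, List.mem_singleton] at hx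
    exact hx ▸ ha
  | @cons a c b h q ih =>
    intro ha x hx
    rw [SimpleGraph.Walk.support_cons, List.mem_cons] at hx
    rcases hx with rfl | hx
    · exact ha
    · exact ih ((hcoh h).mp ha) x hx

variable {V : Type*}

/-- Transfer preserves cycles. -/
lemma transfer_isCycle {K H : SimpleGraph V} {v : V} (p : K.Walk v v)
    (hp : ∀ e ∈ p.edges, e ∈ H.edgeSet) (hc : p.IsCycle) :
    (p.transfer H hp).IsCycle := by
  rw [Walk.isCycle_def] at hc ⊢
  refine ⟨?_, ?_, ?_⟩
  · rw [Walk.isTrail_def, Walk.edges_transfer]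
    exact hc.1.edges_nodup
  · intro h
    have := congrArg Walk.length h
    rw [Walk.length_transfer] at this
    have h3 := hc.2.1
    cases p with
    | nil => exact h3 rfl
    | cons h q => simp at this
  · rw [Walk.support_transfer]; exact hc.2.2

/-- In a walk with no repeated vertices ending at `w`, there is at most one
edge incident to `w`. -/
lemma unique_edge_at_end {K : SimpleGraph V} :
    ∀ {b w : V} (p : K.Walk b w), p.support.Nodup →
      ∀ u v, s(w, u) ∈ p.edges → s(w, v) ∈ p.edges → u = v := by
  intro b w p
  induction p with
  | nil => intro _ u v hu; simp at hu
  | @cons b x w h q ih =>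
    intro hnd u v hu hv
    rw [Walk.support_cons, List.nodup_cons] at hnd
    obtain ⟨hbq, hndq⟩ := hnd
    have hwb : w ≠ b := fun hwb => hbq (hwb ▸ q.end_mem_support)
    have key : ∀ z, s(w, z) = s(b, x) → q.edges = [] ∧ z = b := by
      intro z hz
      rw [Sym2.eq_iff] at hz
      rcases hz with ⟨h1, h2⟩ | ⟨h1, h2⟩
      · exact absurd h1 hwb
      · subst h1 h2
        constructor
        · cases q with
          | nil => rfl
          | cons h' q' =>
            exfalso
            rw [Walk.support_cons, List.nodup_cons] at hndq
            exact hndq.1 q'.end_mem_support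
        · rfl
    rw [Walk.edges_cons, List.mem_cons] at hu hv
    rcases hu with hu | hu <;> rcases hv with hv | hv
    · exact (key u hu).2.trans (key v hv).2.symm
    · exact absurd ((key u hu).1 ▸ hv) (by simp)
    · exact absurd ((key v hv).1 ▸ hu) (by simp)
    · exact ih hndq u v hu hv

variable {V : Type*}

lemma two_le_length {K : SimpleGraph V} {x y : V} (d : K.Walk x y) (hxy : x ≠ y)
    (hne : s(x, y) ∉ d.edges) : 2 ≤ d.length := by
  cases d with
  | nil => exact absurd rfl hxy
  | cons h' d' =>
    cases d' with
    | nil => exact absurd (by simp) hne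
    | cons h'' d'' => simp only [Walk.length_cons]; omega

/-- Shortening a cycle along a chord. -/
lemma shorten_cycle {K : SimpleGraph V} {u w : V} (q0 : K.Walk u u) (hc : q0.IsCycle)
    (hw : w ∈ q0.support) (hadj : K.Adj u w) (hch : s(u, w) ∉ q0.edges) :
    ∃ c : K.Walk w w, c.IsCycle ∧ c.length < q0.length ∧
      ∀ x ∈ c.support, x ∈ q0.support := by
  classical
  cases q0 with
  | nil => exact absurd hc (by simp)
  | @cons _ b _ h q₁ =>
    rw [Walk.cons_isCycle_iff] at hc
    obtain ⟨hq₁path, hfe⟩ := hc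
    have hwu : w ≠ u := hadj.ne'
    have hwq : w ∈ q₁.support := by
      rw [Walk.support_cons, List.mem_cons] at hw
      exact hw.resolve_left hwu
    set t := q₁.takeUntil w hwq with ht_def
    have ht : t.IsPath := hq₁path.takeUntil hwq
    have hspec := q₁.take_spec hwq
    have hu_not : u ∉ t.support := by
      have hnd : q₁.support.Nodup := hq₁path.support_nodup
      rw [← hspec, Walk.support_append] at hnd
      have hdisj := List.disjoint_of_nodup_append hnd
      intro hut
      exact hdisj hut (Walk.end_mem_tail_support_of_ne hwu _)
    refine ⟨Walk.cons hadj.symm (Walk.cons h t), ?_, ?_, ?_⟩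
    · rw [Walk.cons_isCycle_iff, Walk.cons_isPath_iff]
      refine ⟨⟨ht, hu_not⟩, ?_⟩
      rw [Walk.edges_cons, List.mem_cons]
      rintro (heq | hmem)
      · rw [Sym2.eq_iff] at heq
        rcases heq with ⟨h1, _⟩ | ⟨h1, _⟩
        · exact hwu h1
        · subst h1
          exact hch (by simp)
      · have : s(w, u) ∈ q₁.edges := q₁.edges_takeUntil_subset hwq hmem
        rw [Sym2.eq_swap] at this
        exact hch (by simp [this])
    · have hlq : q₁.length = t.length + (q₁.dropUntil w hwq).length := by
        have := congrArg Walk.length hspec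
        rwa [Walk.length_append, eq_comm] at this
      have h2 : 2 ≤ (q₁.dropUntil w hwq).length := by
        refine two_le_length _ hwu ?_
        intro hmem
        have : s(w, u) ∈ q₁.edges := q₁.edges_dropUntil_subset hwq hmem
        rw [Sym2.eq_swap] at this
        exact hch (by simp [this])
      simp only [Walk.length_cons]
      omega
    · intro x hx
      simp only [Walk.support_cons, List.mem_cons] at hx ⊢
      rcases hx with rfl | rfl | hx
      · rw [Walk.support_cons, List.mem_cons] at hw; tauto
      · left; rfl
      · exact Or.inr (q₁.support_takeUntil_subset hwq hx)

/-- Every cycle contains an induced cycle on a subset of its vertices. -/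
lemma exists_induced_cycle {K : SimpleGraph V} :
    ∀ (n : ℕ) {v : V} (p : K.Walk v v), p.IsCycle → p.length ≤ n →
      ∃ (w : V) (q : K.Walk w w), q.IsInducedCycle ∧ ∀ x ∈ q.support, x ∈ p.support := by
  classical
  intro n
  induction n with
  | zero =>
    intro v p hp hl
    have := hp.three_le_length
    omega
  | succ n ih =>
    intro v p hp hl
    by_cases hind : ∀ u w, u ∈ p.support → w ∈ p.support → K.Adj u w → s(u, w) ∈ p.edges
    · exact ⟨v, p, ⟨hp, hind⟩, fun x hx => hx⟩
    · push_neg at hind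
      obtain ⟨u, w, hu, hw, hadj, hch⟩ := hind
      have hq0c : (p.rotate u hu).IsCycle := hp.rotate hu
      have hsupp : ∀ x, x ∈ (p.rotate u hu).support ↔ x ∈ p.support := by
        intro x
        cases p with
        | nil => exact absurd hp (by simp)
        | cons h' q' =>
          constructor
          · intro hx
            rcases Walk.mem_support_iff _ |>.mp hx with rfl | hx'
            · exact hu
            · have := ((Walk.cons h' q').support_rotate u hu).mem_iff.mp hx'
              rw [Walk.support_cons]
              exact List.mem_cons_of_mem _ this
          · intro hx
            by_cases hxu : x = u
            · subst hxu; exact Walk.start_mem_support _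
            · have hx' : x ∈ (Walk.cons h' q').support.tail := by
                rw [Walk.support_cons, List.mem_cons] at hx
                rcases hx with rfl | hx
                · exact q'.end_mem_support
                · exact hx
              have := ((Walk.cons h' q').support_rotate u hu).mem_iff.mpr hx'
              exact List.mem_of_mem_tail this
      have hedges : ∀ e, e ∈ (p.rotate u hu).edges ↔ e ∈ p.edges := fun e =>
        (p.rotate_edges u hu).mem_iff
      have hlen : (p.rotate u hu).length = p.length := by
        have := (p.rotate_edges u hu).perm.length_eq
        rwa [Walk.length_edges, Walk.length_edges] at this
      obtain ⟨c, hcyc, hclen, hcsupp⟩ :=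
        shorten_cycle (p.rotate u hu) hq0c ((hsupp w).mpr hw) hadj
          (fun hm => hch ((hedges _).mp hm))
      obtain ⟨w', q, hq, hqsupp⟩ := ih c hcyc (by omega)
      exact ⟨w', q, hq, fun x hx => (hsupp x).mp (hcsupp x (hqsupp x hx))⟩

variable {V : Type*}

lemma backward {α : Type*} (G H : SimpleGraph V) (φ : V → α) (hle : G ≤ H)
    (hch : IsChordal H) (hprop : IsProperColoring H φ) (hφ : IsProperColoring G φ) :
    IsAcyclicColoring G φ := by
  refine ⟨hφ, fun c₁ c₂ => ?_⟩
  intro v p hp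
  set T : Set V := {v | φ v = c₁ ∨ φ v = c₂} with hT
  let f : G.induce T →g H := ⟨Subtype.val, fun {a b} hab => hle hab⟩
  have hq : (p.map f).IsCycle :=
    (Walk.map_isCycle_iff_of_injective Subtype.val_injective).mpr hp
  have hqT : ∀ x ∈ (p.map f).support, x ∈ T := by
    intro x hx
    rw [Walk.support_map, List.mem_map] at hx
    obtain ⟨a, _, rfl⟩ := hx
    exact a.2
  obtain ⟨w, r, hr, hrsupp⟩ := exists_induced_cycle (p.map f).length (p.map f) hq le_rfl
  have hle3 : r.length ≤ 3 := hch w r hr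
  have hge3 : 3 ≤ r.length := hr.1.three_le_length
  have hrT : ∀ x ∈ r.support, x ∈ T := fun x hx => hqT x (hrsupp x hx)
  clear hrsupp hqT hq hp
  cases r with
  | nil => simp at hge3
  | @cons _ x _ h1 r1 =>
    cases r1 with
    | nil => simp at hge3
    | @cons _ y _ h2 r2 =>
      cases r2 with
      | nil => simp at hge3
      | @cons _ z _ h3 r3 =>
        cases r3 with
        | cons h4 r4 => simp [Walk.length_cons] at hle3; omega
        | nil =>
          have n1 : φ w ≠ φ x := hprop h1
          have n2 : φ x ≠ φ y := hprop h2
          have n3 : φ y ≠ φ w := hprop h3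
          have hw : w ∈ T := hrT w (by simp)
          have hx : x ∈ T := hrT x (by simp)
          have hy : y ∈ T := hrT y (by simp)
          rw [hT] at hw hx hy
          simp only [Set.mem_setOf_eq] at hw hx hy
          rcases hw with hw | hw <;> rcases hx with hx | hx <;> rcases hy with hy | hy <;>
            simp_all

variable {V : Type*}

lemma first_step {K : SimpleGraph V} {x y : V} (h : K.Reachable x y) (hxy : x ≠ y) :
    ∃ z, K.Adj x z := by
  obtain ⟨w⟩ := h
  cases w with
  | nil => exact absurd rfl hxy
  | cons h' _ => exact ⟨_, h'⟩

lemma cograph_compl {G : SimpleGraph V} (hG : IsCograph G) : IsCograph Gᶜ := by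
  rintro ⟨a, b, c, d, hab, hac, had, hbc, hbd, hcd, e1, e2, e3, n1, n2, n3⟩
  rw [compl_adj] at e1 e2 e3
  have g1 : G.Adj a c := by
    by_contra h; exact n1 ⟨hac, h⟩
  have g2 : G.Adj a d := by
    by_contra h; exact n2 ⟨had, h⟩
  have g3 : G.Adj b d := by
    by_contra h; exact n3 ⟨hbd, h⟩
  exact hG ⟨b, d, a, c, hbd, hab.symm, hbc, had.symm, hcd.symm, hac,
    g3, g2.symm, g1, fun h => e1.2 h.symm, e2.2, fun h => e3.2 h.symm⟩

open AuxCograph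
variable {V : Type*}

lemma core [DecidableEq V] {G : SimpleGraph V} (hG : IsCograph G) {s : Finset V} {v : V} (hv : v ∈ s)
    {a b : V} (ha : a ∈ s.erase v) (hb : b ∈ s.erase v)
    (hab : ¬ (restrict G (s.erase v)).Reachable a b)
    (hconn : ∀ x ∈ s, ∀ y ∈ s, (restrict G s).Reachable x y)
    (hconnc : ∀ x ∈ s, ∀ y ∈ s, (restrict Gᶜ s).Reachable x y) : False := by
  have hv' : v ∉ (s.erase v) := Finset.notMem_erase v s
  have hsub : (s.erase v) ⊆ s := Finset.erase_subset v s
  -- Claim 1: from every vertex of (s.erase v) one can reach (within (s.erase v)) a G-neighbor of v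
  have claim1 : ∀ x ∈ (s.erase v), ∃ z ∈ (s.erase v), G.Adj v z ∧ (restrict G (s.erase v)).Reachable x z := by
    intro x hx
    by_contra hno
    push_neg at hno
    have hclosed : ∀ ⦃y z : V⦄, y ∈ {t | t ∈ (s.erase v) ∧ (restrict G (s.erase v)).Reachable x t} →
        (restrict G s).Adj y z → z ∈ {t | t ∈ (s.erase v) ∧ (restrict G (s.erase v)).Reachable x t} := by
      intro y z hy hyz
      obtain ⟨hadj, hys, hzs⟩ := hyz
      by_cases hzv : z = v
      · subst hzv
        exact absurd (hno y hy.1 hadj.symm) (not_not_intro hy.2)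
      · have hzs' : z ∈ (s.erase v) := Finset.mem_erase.mpr ⟨hzv, hzs⟩
        exact ⟨hzs', hy.2.trans (Adj.reachable ⟨hadj, hy.1, hzs'⟩)⟩
    have hxC : x ∈ {t | t ∈ (s.erase v) ∧ (restrict G (s.erase v)).Reachable x t} := ⟨hx, Reachable.refl x⟩
    have hvC := mem_of_reachable hclosed (hconn x (hsub hx) v hv) hxC
    exact hv' hvC.1
  -- Claim 2: v has a non-neighbor in (s.erase v)
  have claim2 : ∃ y ∈ (s.erase v), ¬ G.Adj v y := by
    by_contra hall
    push_neg at hall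
    have hane : a ≠ v := (Finset.mem_erase.mp ha).1
    obtain ⟨z, hz⟩ := first_step (hconnc v hv a (hsub ha)) (Ne.symm hane)
    obtain ⟨hzc, _, hzs⟩ := hz
    rw [compl_adj] at hzc
    have hzs' : z ∈ (s.erase v) := Finset.mem_erase.mpr ⟨fun h => hzc.1 h.symm, hzs⟩
    exact hzc.2 (hall z hzs')
  obtain ⟨y, hy, hvy⟩ := claim2
  obtain ⟨x₀, hx₀s, hx₀adj, hyx₀⟩ := claim1 y hy
  -- find a switching edge from x₀ (adjacent to v) to y (not adjacent to v)
  obtain ⟨wlk⟩ := hyx₀.symm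
  obtain ⟨p, q, hpq, hvp, hvq⟩ :=
    exists_switch_edge (P := fun t => G.Adj v t) wlk hx₀adj hvy
  have hps' : p ∈ (s.erase v) := hpq.2.1
  have hqs' : q ∈ (s.erase v) := hpq.2.2
  -- pick the far component
  have hcq : ¬ (restrict G (s.erase v)).Reachable a q ∨ ¬ (restrict G (s.erase v)).Reachable b q := by
    by_contra hcon
    push_neg at hcon
    exact hab (hcon.1.trans hcon.2.symm)
  obtain ⟨c, hcs', hcq⟩ : ∃ c ∈ (s.erase v), ¬ (restrict G (s.erase v)).Reachable c q := by
    rcases hcq with h | h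
    · exact ⟨a, ha, h⟩
    · exact ⟨b, hb, h⟩
  obtain ⟨z, hzs', hvz, hcz⟩ := claim1 c hcs'
  have hpq' : (restrict G (s.erase v)).Reachable p q := Adj.reachable hpq
  have hzp : ¬ G.Adj z p := by
    intro h
    exact hcq ((hcz.trans (Adj.reachable ⟨h, hzs', hps'⟩)).trans hpq')
  have hzq : ¬ G.Adj z q := by
    intro h
    exact hcq (hcz.trans (Adj.reachable ⟨h, hzs', hqs'⟩))
  have hzpne : z ≠ p := by
    rintro rfl
    exact hcq (hcz.trans hpq')
  have hzqne : z ≠ q := by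
    rintro rfl
    exact hcq hcz
  exact hG ⟨q, p, v, z,
    hpq.1.ne', fun h => (Finset.mem_erase.mp hqs').1 h,
    hzqne.symm, fun h => (Finset.mem_erase.mp hps').1 h, hzpne.symm,
    fun h => hv' (h ▸ hzs'),
    hpq.1.symm, hvp.symm, hvz,
    fun h => hvq h.symm, fun h => hzq h.symm, fun h => hzp h.symm⟩

lemma exists_split [DecidableEq V] {G : SimpleGraph V} (hG : IsCograph G) :
    ∀ (n : ℕ) (s : Finset V), s.card ≤ n → 2 ≤ s.card →
      ∃ S ⊆ s, S.Nonempty ∧ (s \ S).Nonempty ∧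
        ((∀ u ∈ S, ∀ v ∈ s \ S, ¬ G.Adj u v) ∨ (∀ u ∈ S, ∀ v ∈ s \ S, G.Adj u v)) := by
  intro n
  induction n with
  | zero => intro s h1 h2; omega
  | succ n ih =>
    intro s hsn hs2
    classical
    by_cases hconn : ∀ x ∈ s, ∀ y ∈ s, (restrict G s).Reachable x y
    · by_cases hconnc : ∀ x ∈ s, ∀ y ∈ s, (restrict Gᶜ s).Reachable x y
      · exfalso
        rcases eq_or_lt_of_le hs2 with h2 | h3
        · -- s has exactly two elements
          obtain ⟨u, w, huw, rfl⟩ := Finset.card_eq_two.mp h2.symm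
          have hu : u ∈ ({u, w} : Finset V) := by simp
          have hw : w ∈ ({u, w} : Finset V) := by simp
          obtain ⟨z, hz⟩ := first_step (hconn u hu w hw) huw
          have hzw : z = w := by
            have := hz.2.2
            have hne := hz.1.ne
            simp only [Finset.mem_insert, Finset.mem_singleton] at this
            tauto
          obtain ⟨z', hz'⟩ := first_step (hconnc u hu w hw) huw
          have hz'w : z' = w := by
            have := hz'.2.2
            have hne := hz'.1.ne
            simp only [Finset.mem_insert, Finset.mem_singleton] at this
            tauto
          subst hzw hz'w
          exact ((compl_adj _ _ _).mp hz'.1).2 hz.1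
        · have hsne : s.Nonempty := Finset.card_pos.mp (by omega)
          obtain ⟨v, hv⟩ := hsne
          have hcard' : (s.erase v).card = s.card - 1 := Finset.card_erase_of_mem hv
          obtain ⟨S', hS's, hS'ne, hS'comp, hsplit⟩ := ih (s.erase v) (by omega) (by omega)
          obtain ⟨x, hx⟩ := hS'ne
          obtain ⟨y, hy⟩ := hS'comp
          rcases hsplit with hnc | hac
          · have hdis : ¬ (restrict G (s.erase v)).Reachable x y := by
              intro hr
              have hclosed : ∀ ⦃p q : V⦄, p ∈ {t | t ∈ S'} →
                  (restrict G (s.erase v)).Adj p q → q ∈ {t | t ∈ S'} := by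
                intro p q hp hpq
                by_contra hq
                exact hnc p hp q (Finset.mem_sdiff.mpr ⟨hpq.2.2, hq⟩) hpq.1
              exact (Finset.mem_sdiff.mp hy).2 (mem_of_reachable hclosed hr hx)
            exact core hG hv (hS's hx) (Finset.mem_sdiff.mp hy).1 hdis hconn hconnc
          · have hdis : ¬ (restrict Gᶜ (s.erase v)).Reachable x y := by
              intro hr
              have hclosed : ∀ ⦃p q : V⦄, p ∈ {t | t ∈ S'} →
                  (restrict Gᶜ (s.erase v)).Adj p q → q ∈ {t | t ∈ S'} := by
                intro p q hp hpq
                by_contra hq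
                exact ((compl_adj _ _ _).mp hpq.1).2
                  (hac p hp q (Finset.mem_sdiff.mpr ⟨hpq.2.2, hq⟩))
              exact (Finset.mem_sdiff.mp hy).2 (mem_of_reachable hclosed hr hx)
            have hconn' : ∀ x ∈ s, ∀ y ∈ s, (restrict Gᶜᶜ s).Reachable x y := by
              rw [compl_compl]
              exact hconn
            exact core (cograph_compl hG) hv (hS's hx) (Finset.mem_sdiff.mp hy).1 hdis
              hconnc hconn'
      · push_neg at hconnc
        obtain ⟨x, hxs, y, hys, hxy⟩ := hconnc
        refine ⟨s.filter (fun z => (restrict Gᶜ s).Reachable x z), Finset.filter_subset _ _,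
          ⟨x, Finset.mem_filter.mpr ⟨hxs, Reachable.refl x⟩⟩,
          ⟨y, Finset.mem_sdiff.mpr ⟨hys, fun hy => hxy (Finset.mem_filter.mp hy).2⟩⟩,
          Or.inr ?_⟩
        intro u hu w hw
        obtain ⟨hus, hxu⟩ := Finset.mem_filter.mp hu
        obtain ⟨hws, hwnot⟩ := Finset.mem_sdiff.mp hw
        by_contra hnadj
        have huw : u ≠ w := by
          rintro rfl
          exact hwnot hu
        exact hwnot (Finset.mem_filter.mpr ⟨hws,
          hxu.trans (Adj.reachable ⟨(compl_adj _ _ _).mpr ⟨huw, hnadj⟩, hus, hws⟩)⟩)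
    · push_neg at hconn
      obtain ⟨x, hxs, y, hys, hxy⟩ := hconn
      refine ⟨s.filter (fun z => (restrict G s).Reachable x z), Finset.filter_subset _ _,
        ⟨x, Finset.mem_filter.mpr ⟨hxs, Reachable.refl x⟩⟩,
        ⟨y, Finset.mem_sdiff.mpr ⟨hys, fun hy => hxy (Finset.mem_filter.mp hy).2⟩⟩,
        Or.inl ?_⟩
      intro u hu w hw
      obtain ⟨hus, hxu⟩ := Finset.mem_filter.mp hu
      obtain ⟨hws, hwnot⟩ := Finset.mem_sdiff.mp hw
      intro hadj
      exact hwnot (Finset.mem_filter.mpr ⟨hws, hxu.trans (Adj.reachable ⟨hadj, hus, hws⟩)⟩)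

variable {V : Type*}

lemma cograph_restrict {G : SimpleGraph V} (hG : IsCograph G) (s : Finset V) :
    IsCograph (restrict G s) := by
  rintro ⟨a, b, c, d, h1, h2, h3, h4, h5, h6, e1, e2, e3, n1, n2, n3⟩
  have ha := e1.2.1
  have hb := e1.2.2
  have hc := e2.2.2
  have hd := e3.2.2
  exact hG ⟨a, b, c, d, h1, h2, h3, h4, h5, h6, e1.1, e2.1, e3.1,
    fun h => n1 ⟨h, ha, hc⟩, fun h => n2 ⟨h, ha, hd⟩, fun h => n3 ⟨h, hb, hd⟩⟩

lemma isAcyclicColoring_of_le {α : Type*} {G' G : SimpleGraph V} {φ : V → α}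
    (h : G' ≤ G) (hA : IsAcyclicColoring G φ) : IsAcyclicColoring G' φ := by
  refine ⟨fun u v huv => hA.1 (h huv), fun c₁ c₂ => ?_⟩
  intro v p hp
  have hle : G'.induce {v | φ v = c₁ ∨ φ v = c₂} ≤ G.induce {v | φ v = c₁ ∨ φ v = c₂} :=
    fun a b hab => h hab
  exact hA.2 c₁ c₂ (p.mapLe hle) (hp.mapLe hle)

lemma chordal_of_no_edges {K : SimpleGraph V} (h : ∀ u v, ¬ K.Adj u v) :
    IsChordal K := by
  intro v p hp
  exfalso
  cases p with
  | nil => exact hp.1.ne_nil rfl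
  | cons h' q => exact h _ _ h'

lemma length_le_of_transfer {H K : SimpleGraph V} (hch : IsChordal K) (hK : K ≤ H)
    {v : V} (p : H.Walk v v) (hp : p.IsInducedCycle)
    (he : ∀ e ∈ p.edges, e ∈ K.edgeSet) : p.length ≤ 3 := by
  have hc : (p.transfer K he).IsCycle := transfer_isCycle p he hp.1
  have hind : (p.transfer K he).IsInducedCycle := by
    refine ⟨hc, fun u w hu hw hadj => ?_⟩
    rw [Walk.support_transfer] at hu hw
    rw [Walk.edges_transfer]
    exact hp.2 u w hu hw (hK hadj)
  have := hch v (p.transfer K he) hind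
  rwa [Walk.length_transfer] at this

lemma not_acyclic_of_two_two {α : Type*} {G : SimpleGraph V} {φ : V → α}
    {x x' y y' : V} (hxx : x ≠ x') (hyy : y ≠ y') (hcx : φ x = φ x') (hcy : φ y = φ y')
    (hc12 : φ x ≠ φ y)
    (a1 : G.Adj x y) (a2 : G.Adj y x') (a3 : G.Adj x' y') (a4 : G.Adj y' x) :
    ¬ (G.induce {v | φ v = φ x ∨ φ v = φ y}).IsAcyclic := by
  intro hac
  set T : Set V := {v | φ v = φ x ∨ φ v = φ y} with hT
  have hX : x ∈ T := Or.inl rfl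
  have hX' : x' ∈ T := Or.inl hcx.symm
  have hY : y ∈ T := Or.inr rfl
  have hY' : y' ∈ T := Or.inr hcy.symm
  let X : T := ⟨x, hX⟩
  let X' : T := ⟨x', hX'⟩
  let Y : T := ⟨y, hY⟩
  let Y' : T := ⟨y', hY'⟩
  have A1 : (G.induce T).Adj X Y := a1
  have A2 : (G.induce T).Adj Y X' := a2
  have A3 : (G.induce T).Adj X' Y' := a3
  have A4 : (G.induce T).Adj Y' X := a4
  have hxy : x ≠ y := fun h => hc12 (h ▸ rfl)
  have hxy' : x ≠ y' := fun h => hc12 (hcy ▸ h ▸ rfl)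
  have hx'y : x' ≠ y := fun h => hc12 (hcx.trans (h ▸ rfl))
  have hx'y' : x' ≠ y' := fun h => hc12 (hcx.trans (h ▸ hcy.symm ▸ rfl))
  refine hac (Walk.cons A1 (Walk.cons A2 (Walk.cons A3 (Walk.cons A4 Walk.nil)))) ?_
  rw [Walk.isCycle_def]
  refine ⟨?_, by simp, ?_⟩
  · rw [Walk.isTrail_def]
    simp only [Walk.edges_cons, Walk.edges_nil, List.nodup_cons, List.mem_cons,
      List.not_mem_nil, or_false, List.mem_singleton, List.nodup_nil, and_true,
      Sym2.eq_iff, Subtype.mk.injEq]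
    refine ⟨?_, ?_, ?_⟩ <;> push_neg <;>
      simp_all [X, X', Y, Y', Subtype.ext_iff, hxx, hyy, hxy, hxy', hx'y, hx'y', hxx.symm, hyy.symm]
  · simp only [Walk.support_cons, Walk.support_nil, List.tail_cons, List.nodup_cons,
      List.mem_cons, List.not_mem_nil, or_false, List.mem_singleton, List.nodup_nil, and_true,
      Subtype.mk.injEq]
    refine ⟨?_, ?_, ?_⟩ <;> push_neg <;>
      simp_all [X, X', Y, Y', Subtype.ext_iff, Ne.symm hx'y, Ne.symm hxy, Ne.symm hxx, Ne.symm hxy']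

variable {V : Type*}

lemma mem_support_rotate_iff {K : SimpleGraph V} {v u : V} [DecidableEq V]
    (p : K.Walk v v) (hp : p.IsCycle) (hu : u ∈ p.support) :
    ∀ x, x ∈ (p.rotate u hu).support ↔ x ∈ p.support := by
  intro x
  cases p with
  | nil => exact absurd hp (by simp)
  | cons h' q' =>
    constructor
    · intro hx
      rcases Walk.mem_support_iff _ |>.mp hx with rfl | hx'
      · exact hu
      · have := ((Walk.cons h' q').support_rotate u hu).mem_iff.mp hx'
        rw [Walk.support_cons]
        exact List.mem_cons_of_mem _ this
    · intro hx
      by_cases hxu : x = u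
      · subst hxu; exact Walk.start_mem_support _
      · have hx' : x ∈ (Walk.cons h' q').support.tail := by
          rw [Walk.support_cons, List.mem_cons] at hx
          rcases hx with rfl | hx
          · exact q'.end_mem_support
          · exact hx
        have := ((Walk.cons h' q').support_rotate u hu).mem_iff.mpr hx'
        exact List.mem_of_mem_tail this

lemma length_rotate_eq {K : SimpleGraph V} {v u : V} [DecidableEq V]
    (p : K.Walk v v) (hu : u ∈ p.support) : (p.rotate u hu).length = p.length := by
  have := (p.rotate_edges u hu).perm.length_eq
  rwa [Walk.length_edges, Walk.length_edges] at this

lemma univ_aux {H : SimpleGraph V} {U : Set V} {w : V}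
    (huniv : ∀ u ∈ U, u ≠ w → H.Adj w u) (q : H.Walk w w) (hqc : q.IsCycle)
    (hqind : ∀ u x, u ∈ q.support → x ∈ q.support → H.Adj u x → s(u, x) ∈ q.edges)
    (hU : ∀ x ∈ q.support, x ∈ U) : q.length ≤ 3 := by
  classical
  by_contra hgt
  push_neg at hgt
  have hnodup := hqc.2
  cases q with
  | nil => simp at hgt
  | @cons _ b _ h q₁ =>
    obtain ⟨hq₁path, hfe⟩ := (Walk.cons_isCycle_iff q₁ h).mp hqc
    have hbw : b ≠ w := by rintro rfl; exact H.irrefl h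
    have hlen₁ : 3 ≤ q₁.length := by
      have : (Walk.cons h q₁).length = q₁.length + 1 := by simp
      omega
    have hnodup' : q₁.support.Nodup := by
      simpa using hnodup
    obtain ⟨u₀, hu₀⟩ : ∃ u₀, ∀ z, s(w, z) ∈ (Walk.cons h q₁).edges → z = b ∨ z = u₀ := by
      by_cases hex : ∃ z, s(w, z) ∈ q₁.edges
      · obtain ⟨z₀, hz₀⟩ := hex
        refine ⟨z₀, fun z hz => ?_⟩
        rw [Walk.edges_cons, List.mem_cons] at hz
        rcases hz with hz | hz
        · rw [Sym2.eq_iff] at hz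
          rcases hz with ⟨_, rfl⟩ | ⟨hwb, _⟩
          · exact Or.inl rfl
          · exact absurd hwb.symm hbw
        · exact Or.inr (unique_edge_at_end q₁ hnodup' z z₀ hz hz₀)
      · refine ⟨b, fun z hz => ?_⟩
        rw [Walk.edges_cons, List.mem_cons] at hz
        rcases hz with hz | hz
        · rw [Sym2.eq_iff] at hz
          rcases hz with ⟨_, rfl⟩ | ⟨hwb, _⟩
          · exact Or.inl rfl
          · exact absurd hwb.symm hbw
        · exact absurd ⟨z, hz⟩ hex
    have hcard : 4 ≤ q₁.support.toFinset.card := by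
      rw [List.toFinset_card_of_nodup hnodup', Walk.length_support]
      omega
    have hsd : (q₁.support.toFinset \ {w, b, u₀}).Nonempty := by
      rw [← Finset.card_pos]
      have h3 : ({w, b, u₀} : Finset V).card ≤ 3 :=
        calc ({w, b, u₀} : Finset V).card ≤ ({b, u₀} : Finset V).card + 1 :=
              Finset.card_insert_le _ _
          _ ≤ (({u₀} : Finset V).card + 1) + 1 :=
              Nat.add_le_add_right (Finset.card_insert_le _ _) 1
          _ ≤ 3 := by simp
      have hle := Finset.le_card_sdiff ({w, b, u₀} : Finset V) q₁.support.toFinset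
      omega
    obtain ⟨u, hu⟩ := hsd
    rw [Finset.mem_sdiff, List.mem_toFinset] at hu
    obtain ⟨husup, hunotin⟩ := hu
    simp only [Finset.mem_insert, Finset.mem_singleton, not_or] at hunotin
    obtain ⟨huw, hub, huu₀⟩ := hunotin
    have husup' : u ∈ (Walk.cons h q₁).support := by
      rw [Walk.support_cons]
      exact List.mem_cons_of_mem _ husup
    have hadj : H.Adj w u := huniv u (hU u husup') huw
    have hmem := hqind w u (Walk.start_mem_support _) husup' hadj
    rcases hu₀ u hmem with rfl | rfl
    · exact hub rfl
    · exact huu₀ rfl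

lemma length_le_of_univ {H : SimpleGraph V} {U : Set V} {w : V}
    (huniv : ∀ u ∈ U, u ≠ w → H.Adj w u) {v : V} (p : H.Walk v v)
    (hpc : p.IsCycle)
    (hpind : ∀ u x, u ∈ p.support → x ∈ p.support → H.Adj u x → s(u, x) ∈ p.edges)
    (hw : w ∈ p.support) (hU : ∀ x ∈ p.support, x ∈ U) :
    p.length ≤ 3 := by
  classical
  have hsupp := mem_support_rotate_iff p hpc hw
  have hedges : ∀ e, e ∈ (p.rotate w hw).edges ↔ e ∈ p.edges := fun e =>
    (p.rotate_edges w hw).mem_iff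
  have hlen := length_rotate_eq p hw
  have h := univ_aux huniv (p.rotate w hw) (hpc.rotate hw)
    (fun u x hu hx hadj =>
      (hedges _).mpr (hpind u x ((hsupp u).mp hu) ((hsupp x).mp hx) hadj))
    (fun x hx => hU x ((hsupp x).mp hx))
  omega

lemma support_mem_of_eIn {K : SimpleGraph V} {s : Finset V}
    (hK : ∀ u v, K.Adj u v → u ∈ s ∧ v ∈ s) {v : V} (p : K.Walk v v) (hp : p.IsCycle) :
    ∀ x ∈ p.support, x ∈ s := by
  intro x hx
  rcases support_edge p x hx with rfl | ⟨y, hy, _⟩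
  · cases p with
    | nil => exact absurd hp (by simp)
    | cons h q => exact (hK _ _ h).1
  · exact (hK _ _ hy).1

lemma aux2 {H K : SimpleGraph V} {C : Set V} (hch : IsChordal K) (hle : K ≤ H)
    (hcoh : ∀ ⦃u w : V⦄, H.Adj u w → (u ∈ C ↔ w ∈ C))
    (hin : ∀ u w, H.Adj u w → u ∈ C → w ∈ C → K.Adj u w)
    {v : V} (p : H.Walk v v) (hp : p.IsInducedCycle) (hvC : v ∈ C) :
    p.length ≤ 3 := by
  have hsub := support_subset_of_adj_iff hcoh p hvC
  refine length_le_of_transfer hch hle p hp ?_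
  intro e he
  induction e using Sym2.ind with
  | _ u w =>
    have hadj := p.adj_of_mem_edges he
    rw [SimpleGraph.mem_edgeSet]
    exact hin u w hadj (hsub u (p.fst_mem_support_of_mem_edges he))
      (hsub w (p.snd_mem_support_of_mem_edges he))

lemma chordal_sup {H1 H2 : SimpleGraph V} {A B : Finset V}
    (h1 : IsChordal H1) (h2 : IsChordal H2)
    (e1 : ∀ u v, H1.Adj u v → u ∈ A ∧ v ∈ A) (e2 : ∀ u v, H2.Adj u v → u ∈ B ∧ v ∈ B)
    (hd : ∀ x, x ∈ A → x ∈ B → False) : IsChordal (H1 ⊔ H2) := by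
  have hcoh1 : ∀ ⦃u w : V⦄, (H1 ⊔ H2).Adj u w → (u ∈ (↑A : Set V) ↔ w ∈ (↑A : Set V)) := by
    rintro u w (h | h)
    · exact iff_of_true (e1 u w h).1 (e1 u w h).2
    · exact iff_of_false (fun hu => hd u hu (e2 u w h).1) (fun hw => hd w hw (e2 u w h).2)
  have hcoh2 : ∀ ⦃u w : V⦄, (H1 ⊔ H2).Adj u w → (u ∈ (↑B : Set V) ↔ w ∈ (↑B : Set V)) := by
    rintro u w (h | h)
    · exact iff_of_false (fun hu => hd u (e1 u w h).1 hu) (fun hw => hd w (e1 u w h).2 hw)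
    · exact iff_of_true (e2 u w h).1 (e2 u w h).2
  have hin1 : ∀ u w, (H1 ⊔ H2).Adj u w → u ∈ (↑A : Set V) → w ∈ (↑A : Set V) → H1.Adj u w := by
    rintro u w (h | h) hu _
    · exact h
    · exact absurd (e2 u w h).1 (fun hb => hd u hu hb)
  have hin2 : ∀ u w, (H1 ⊔ H2).Adj u w → u ∈ (↑B : Set V) → w ∈ (↑B : Set V) → H2.Adj u w := by
    rintro u w (h | h) hu _
    · exact absurd (e1 u w h).1 (fun ha => hd u ha hu)
    · exact h
  intro v p hp
  cases p with
  | nil => simp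
  | @cons _ b _ h q =>
    by_cases hvA : v ∈ A
    · exact aux2 h1 le_sup_left hcoh1 hin1 _ hp hvA
    · have hvB : v ∈ B := by
        rcases h with h | h
        · exact absurd (e1 _ _ h).1 hvA
        · exact (e2 _ _ h).1
      exact aux2 h2 le_sup_right hcoh2 hin2 _ hp hvB

lemma join_aux [DecidableEq V] {α : Type*} {φ : V → α} {G : SimpleGraph V} {s A B : Finset V}
    (hABs : A ∪ B = s)
    (hcross : ∀ u ∈ A, ∀ v ∈ B, G.Adj u v)
    (hinj : ∀ y ∈ B, ∀ y' ∈ B, φ y = φ y' → y = y')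
    (hcog : IsCograph G) (heIn : ∀ u v : V, G.Adj u v → u ∈ s ∧ v ∈ s)
    (hAc : IsAcyclicColoring G φ)
    (IH : ∀ G' : SimpleGraph V, IsCograph G' → (∀ u v : V, G'.Adj u v → u ∈ A ∧ v ∈ A) →
      IsAcyclicColoring G' φ →
      ∃ H, G' ≤ H ∧ IsChordal H ∧ IsProperColoring H φ ∧ ∀ u v : V, H.Adj u v → u ∈ A ∧ v ∈ A) :
    ∃ H, G ≤ H ∧ IsChordal H ∧ IsProperColoring H φ ∧
      ∀ u v : V, H.Adj u v → u ∈ s ∧ v ∈ s := by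
  obtain ⟨H1, hH1le, hH1ch, hH1prop, hH1eIn⟩ := IH (restrict G A)
    (cograph_restrict hcog A) (fun u v h => ⟨h.2.1, h.2.2⟩)
    (isAcyclicColoring_of_le (restrict_le G A) hAc)
  have hsubA : A ⊆ s := hABs ▸ Finset.subset_union_left
  have hsubB : B ⊆ s := hABs ▸ Finset.subset_union_right
  let K : SimpleGraph V :=
    { Adj := fun u v => u ≠ v ∧ u ∈ s ∧ v ∈ s ∧ (u ∈ B ∨ v ∈ B)
      symm := ⟨by rintro u v ⟨h1, h2, h3, h4⟩; exact ⟨h1.symm, h3, h2, h4.symm⟩⟩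
      loopless := ⟨fun u h => h.1 rfl⟩ }
  have hHeIn : ∀ u v : V, (H1 ⊔ K).Adj u v → u ∈ s ∧ v ∈ s := by
    rintro u v (h | h)
    · exact ⟨hsubA (hH1eIn u v h).1, hsubA (hH1eIn u v h).2⟩
    · exact ⟨h.2.1, h.2.2.1⟩
  refine ⟨H1 ⊔ K, ?_, ?_, ?_, hHeIn⟩
  · intro u v h
    have hm := heIn u v h
    by_cases hub : u ∈ B
    · exact Or.inr ⟨h.ne, hm.1, hm.2, Or.inl hub⟩
    by_cases hvb : v ∈ B
    · exact Or.inr ⟨h.ne, hm.1, hm.2, Or.inr hvb⟩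
    · have hua : u ∈ A := by
        have := hm.1; rw [← hABs, Finset.mem_union] at this; tauto
      have hva : v ∈ A := by
        have := hm.2; rw [← hABs, Finset.mem_union] at this; tauto
      exact Or.inl (hH1le ⟨h, hua, hva⟩)
  · intro v p hp
    by_cases hBsup : ∃ w ∈ p.support, w ∈ B
    · obtain ⟨w, hwsup, hwB⟩ := hBsup
      have hws : w ∈ s := hsubB hwB
      refine length_le_of_univ (U := {x | x ∈ s}) ?_ p hp.1 hp.2 hwsup ?_
      · intro u hu hne
        exact Or.inr ⟨Ne.symm hne, hws, hu, Or.inl hwB⟩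
      · exact fun x hx => support_mem_of_eIn hHeIn p hp.1 x hx
    · push_neg at hBsup
      refine length_le_of_transfer hH1ch le_sup_left p hp ?_
      intro e he
      induction e using Sym2.ind with
      | _ u x =>
        have hadj := p.adj_of_mem_edges he
        rw [SimpleGraph.mem_edgeSet]
        rcases hadj with h | h
        · exact h
        · exfalso
          rcases h.2.2.2 with hb | hb
          · exact hBsup u (p.fst_mem_support_of_mem_edges he) hb
          · exact hBsup x (p.snd_mem_support_of_mem_edges he) hb
  · rintro u v (h | h)
    · exact hH1prop h
    · obtain ⟨hne, hus, hvs, hB⟩ := h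
      rcases hB with hub | hvb
      · by_cases hvb : v ∈ B
        · exact fun hphi => hne (hinj u hub v hvb hphi)
        · have hva : v ∈ A := by
            rw [← hABs, Finset.mem_union] at hvs; tauto
          exact (hAc.1 (hcross v hva u hub)).symm
      · by_cases hub : u ∈ B
        · exact fun hphi => hne (hinj u hub v hvb hphi)
        · have hua : u ∈ A := by
            rw [← hABs, Finset.mem_union] at hus; tauto
          exact hAc.1 (hcross u hua v hvb)

lemma forward_main {α : Type*} (φ : V → α) :
    ∀ (n : ℕ) (s : Finset V) (G : SimpleGraph V), s.card ≤ n → IsCograph G →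
      (∀ u v : V, G.Adj u v → u ∈ s ∧ v ∈ s) → IsAcyclicColoring G φ →
      ∃ H, G ≤ H ∧ IsChordal H ∧ IsProperColoring H φ ∧
        ∀ u v : V, H.Adj u v → u ∈ s ∧ v ∈ s := by
  intro n
  induction n with
  | zero =>
    intro s G hsn hcog heIn hA
    have hs0 : s = ∅ := Finset.card_eq_zero.mp (le_antisymm hsn (Nat.zero_le _))
    have hnoe : ∀ u v : V, ¬ G.Adj u v := fun u v h => by
      have := (heIn u v h).1
      simp [hs0] at this
    exact ⟨G, le_rfl, chordal_of_no_edges hnoe, hA.1, heIn⟩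
  | succ n ih =>
    intro s G hsn hcog heIn hA
    classical
    by_cases hs2 : 2 ≤ s.card
    case neg =>
      have hnoe : ∀ u v : V, ¬ G.Adj u v := fun u v h => by
        have hm := heIn u v h
        exact hs2 (Finset.one_lt_card.mpr ⟨u, hm.1, v, hm.2, h.ne⟩)
      exact ⟨G, le_rfl, chordal_of_no_edges hnoe, hA.1, heIn⟩
    case pos =>
    obtain ⟨S, hSs, hSne, hScne, hsplit⟩ := exists_split hcog s.card s le_rfl hs2
    obtain ⟨x₁, hx₁⟩ := hSne
    obtain ⟨y₁, hy₁⟩ := hScne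
    have hScard : S.card < s.card := by
      refine Finset.card_lt_card ⟨hSs, fun hss => ?_⟩
      exact (Finset.mem_sdiff.mp hy₁).2 (hss (Finset.mem_sdiff.mp hy₁).1)
    have hCcard : (s \ S).card < s.card := by
      refine Finset.card_lt_card ⟨Finset.sdiff_subset, fun hss => ?_⟩
      exact (Finset.mem_sdiff.mp (hss (hSs hx₁))).2 hx₁
    rcases hsplit with hnc | hac
    · -- disjoint-union case
      obtain ⟨H1, hH1le, hH1ch, hH1prop, hH1eIn⟩ := ih S (restrict G S) (by omega)
        (cograph_restrict hcog S) (fun u v h => ⟨h.2.1, h.2.2⟩)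
        (isAcyclicColoring_of_le (restrict_le G S) hA)
      obtain ⟨H2, hH2le, hH2ch, hH2prop, hH2eIn⟩ := ih (s \ S) (restrict G (s \ S)) (by omega)
        (cograph_restrict hcog (s \ S)) (fun u v h => ⟨h.2.1, h.2.2⟩)
        (isAcyclicColoring_of_le (restrict_le G (s \ S)) hA)
      have hd : ∀ x : V, x ∈ S → x ∈ s \ S → False := fun x hx hx' =>
        (Finset.mem_sdiff.mp hx').2 hx
      refine ⟨H1 ⊔ H2, ?_, chordal_sup hH1ch hH2ch hH1eIn hH2eIn hd, ?_, ?_⟩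
      · intro u v h
        have hm := heIn u v h
        by_cases huS : u ∈ S
        · have hvS : v ∈ S := by
            by_contra hvS
            exact hnc u huS v (Finset.mem_sdiff.mpr ⟨hm.2, hvS⟩) h
          exact Or.inl (hH1le ⟨h, huS, hvS⟩)
        · have hu' : u ∈ s \ S := Finset.mem_sdiff.mpr ⟨hm.1, huS⟩
          have hv' : v ∈ s \ S := by
            by_contra hvS
            have hvS' : v ∈ S := by
              by_contra hvS''
              exact hvS (Finset.mem_sdiff.mpr ⟨hm.2, hvS''⟩)
            exact hnc v hvS' u hu' h.symm
          exact Or.inr (hH2le ⟨h, hu', hv'⟩)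
      · rintro u v (h | h)
        · exact hH1prop h
        · exact hH2prop h
      · rintro u v (h | h)
        · exact ⟨hSs (hH1eIn u v h).1, hSs (hH1eIn u v h).2⟩
        · exact ⟨Finset.sdiff_subset (hH2eIn u v h).1, Finset.sdiff_subset (hH2eIn u v h).2⟩
    · -- join case
      have hinj : (∀ x ∈ S, ∀ x' ∈ S, φ x = φ x' → x = x') ∨
          (∀ y ∈ s \ S, ∀ y' ∈ s \ S, φ y = φ y' → y = y') := by
        by_contra hcon
        push_neg at hcon
        obtain ⟨⟨x, hx, x', hx', hcx, hxx⟩, ⟨y, hy, y', hy', hcy, hyy⟩⟩ := hcon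
        have a1 : G.Adj x y := hac x hx y hy
        have a2 : G.Adj y x' := (hac x' hx' y hy).symm
        have a3 : G.Adj x' y' := hac x' hx' y' hy'
        have a4 : G.Adj y' x := (hac x hx y' hy').symm
        exact not_acyclic_of_two_two hxx hyy hcx hcy (hA.1 a1) a1 a2 a3 a4
          (hA.2 (φ x) (φ y))
      rcases hinj with hinjS | hinjC
      · -- φ injective on S : recurse on s \ S, complete side is S
        refine join_aux (Finset.sdiff_union_of_subset hSs) ?_ hinjS hcog heIn hA ?_
        · intro u hu v hv
          exact (hac v hv u hu).symm
        · intro G' h1 h2 h3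
          exact ih (s \ S) G' (by omega) h1 h2 h3
      · refine join_aux (Finset.union_sdiff_of_subset hSs) ?_ hinjC hcog heIn hA ?_
        · intro u hu v hv
          exact hac u hu v hv
        · intro G' h1 h2 h3
          exact ih S G' (by omega) h1 h2 h3


end AuxCograph

/-- For a cograph `G`, a proper coloring `φ` is acyclic iff `φ` is a
proper coloring of some triangulation of `G`. -/
theorem isAcyclicColoring_iff_proper_coloring_of_triangulation {V : Type*} [Fintype V]
    (G : SimpleGraph V) (hG : IsCograph G) (φ : V → ℕ) (hφ : IsProperColoring G φ) :
    IsAcyclicColoring G φ ↔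
      ∃ H : SimpleGraph V, G ≤ H ∧ IsChordal H ∧ IsProperColoring H φ := by
  constructor
  · intro hAc
    classical
    obtain ⟨H, h1, h2, h3, _⟩ := AuxCograph.forward_main φ Finset.univ.card Finset.univ G
      le_rfl hG (fun u v _ => ⟨Finset.mem_univ u, Finset.mem_univ v⟩) hAc
    exact ⟨H, h1, h2, h3⟩
  · rintro ⟨H, hle, hch, hprop⟩
    exact AuxCograph.backward G H φ hle hch hprop hφ
end
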